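/- arXiv:1803.02651 — 14 statements merged into one kernel-verified Lean document; each statement's English description precedes it below -/
import Mathlib

section
/- (Measure disintegration) Let X and Y be nonempty standard Borel spaces, μ a probability measure on X, f : X → Y a measurable map, and ν = μ.map f the pushforward measure. Then there exists a Markov kernel g : Y ⇸ X such that ν.bind g = μ and, for ν-almost every y ∈ Y, (g y).map f is the Dirac measure at y. Moreover g is unique up to ν-almost-everywhere equality: any two Markov kernels with these properties agree at ν-almost every y. -/
open MeasureTheory ProbabilityTheory

section Aux

variable {X Y : Type*} [MeasurableSpace X] [MeasurableSpace Y]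

/-- If a probability measure gives zero mass to `{x | f x ≠ y}`, its pushforward is `dirac y`. -/
lemma aux_map_eq_dirac [MeasurableSingletonClass Y] {f : X → Y} (hf : Measurable f)
    {m : Measure X} [IsProbabilityMeasure m] {y : Y} (h : m {x | f x ≠ y} = 0) :
    m.map f = Measure.dirac y := by
  ext s hs
  rw [Measure.map_apply hf hs, Measure.dirac_apply' y hs]
  by_cases hys : y ∈ s
  · have h1 : m (f ⁻¹' s) = 1 := by
      refine le_antisymm prob_le_one ?_
      have : m {x | f x = y} = 1 := by
        have := prob_compl_eq_zero_iff (μ := m)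
          (s := {x | f x = y}) (hf (measurableSet_singleton y)) |>.mp ?_
        · exact this
        · convert h using 2
          ext x; simp
      calc (1 : ENNReal) = m {x | f x = y} := this.symm
        _ ≤ m (f ⁻¹' s) := measure_mono (fun x hx => by
            simp only [Set.mem_setOf_eq] at hx; simp [Set.mem_preimage, hx, hys])
    simp [h1, Set.indicator_of_mem hys]
  · have h0 : m (f ⁻¹' s) = 0 := by
      have hsub : f ⁻¹' s ⊆ {x | f x ≠ y} := fun x hx hfx => hys (hfx ▸ hx)
      exact measure_mono_null hsub h
    simp [h0, Set.indicator_of_notMem hys]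

/-- Converse direction: if the pushforward is `dirac y` then `{x | f x ≠ y}` is null. -/
lemma aux_null_of_map_dirac [MeasurableSingletonClass Y] {f : X → Y} (hf : Measurable f)
    {m : Measure X} {y : Y} (h : m.map f = Measure.dirac y) :
    m {x | f x ≠ y} = 0 := by
  have : m (f ⁻¹' ({y}ᶜ)) = (m.map f) ({y}ᶜ) :=
    (Measure.map_apply hf (measurableSet_singleton y).compl).symm
  have h2 : m (f ⁻¹' ({y}ᶜ)) = 0 := by
    rw [this, h, Measure.dirac_apply' y (measurableSet_singleton y).compl]
    simp
  convert h2 using 2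
  ext x; simp

end Aux

/-- Measure disintegration theorem: a probability measure `μ` on a standard Borel
space disintegrates along any measurable map `f`, and the disintegration is unique
up to `ν`-a.e. equality, where `ν = μ.map f`. -/
theorem measure_disintegration
    {X Y : Type*}
    [MeasurableSpace X] [StandardBorelSpace X] [Nonempty X]
    [MeasurableSpace Y] [StandardBorelSpace Y] [Nonempty Y]
    (μ : Measure X) [IsProbabilityMeasure μ] (f : X → Y) (hf : Measurable f) :
    (∃ g : Y → Measure X, Measurable g ∧ (∀ y, IsProbabilityMeasure (g y)) ∧
        (μ.map f).bind g = μ ∧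
        ∀ᵐ y ∂(μ.map f), (g y).map f = Measure.dirac y) ∧
    (∀ g₁ g₂ : Y → Measure X,
      Measurable g₁ → (∀ y, IsProbabilityMeasure (g₁ y)) →
        (μ.map f).bind g₁ = μ → (∀ᵐ y ∂(μ.map f), (g₁ y).map f = Measure.dirac y) →
      Measurable g₂ → (∀ y, IsProbabilityMeasure (g₂ y)) →
        (μ.map f).bind g₂ = μ → (∀ᵐ y ∂(μ.map f), (g₂ y).map f = Measure.dirac y) →
      ∀ᵐ y ∂(μ.map f), g₁ y = g₂ y) := by
  have hm : Measurable fun x => (f x, x) := hf.prodMk measurable_id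
  set ν : Measure Y := μ.map f with hν
  set ρ : Measure (Y × X) := μ.map (fun x => (f x, x)) with hρ
  have : IsProbabilityMeasure ν := Measure.isProbabilityMeasure_map hf.aemeasurable
  have : IsProbabilityMeasure ρ := Measure.isProbabilityMeasure_map hm.aemeasurable
  have hfst : ρ.fst = ν := by
    rw [hρ, Measure.fst, Measure.map_map measurable_fst hm]
    rfl
  -- the graph set
  have hs₀ : MeasurableSet {p : Y × X | f p.2 = p.1} := by
    have he := MeasureTheory.measurableEmbedding_embeddingReal Y
    have : {p : Y × X | f p.2 = p.1}
        = {p : Y × X | MeasureTheory.embeddingReal Y (f p.2)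
            = MeasureTheory.embeddingReal Y p.1} := by
      ext p
      simp only [Set.mem_setOf_eq]
      exact ⟨fun h => by rw [h], fun h => he.injective h⟩
    rw [this]
    exact measurableSet_eq_fun
      (he.measurable.comp (hf.comp measurable_snd))
      (he.measurable.comp measurable_fst)
  have hρs₀ : ρ ({p : Y × X | f p.2 = p.1}ᶜ) = 0 := by
    rw [hρ, Measure.map_apply hm hs₀.compl]
    have : ((fun x => (f x, x)) ⁻¹' {p : Y × X | f p.2 = p.1}ᶜ) = ∅ := by
      ext x; simp
    rw [this]
    exact measure_empty
  -- key lemma: any Markov family with the two properties composes to ρ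
  have key : ∀ (κ : Kernel Y X), IsMarkovKernel κ →
      ν.bind κ = μ → (∀ᵐ y ∂ν, (κ y).map f = Measure.dirac y) → ν ⊗ₘ κ = ρ := by
    intro κ hκM hbind hdir
    ext s hs
    rw [Measure.compProd_apply hs, hρ, Measure.map_apply hm hs]
    have hbind' : μ ((fun x => (f x, x)) ⁻¹' s)
        = ∫⁻ y, κ y ((fun x => (f x, x)) ⁻¹' s) ∂ν := by
      rw [← hbind, Measure.bind_apply (hm hs) κ.measurable.aemeasurable]
    rw [hbind']
    refine lintegral_congr_ae ?_
    filter_upwards [hdir] with y hy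
    have h0 : κ y {x | f x ≠ y} = 0 := aux_null_of_map_dirac hf hy
    refine measure_congr ?_
    rw [Filter.eventuallyEq_set]
    have hsub : {x | ¬((y, x) ∈ s ↔ (f x, x) ∈ s)} ⊆ {x | f x ≠ y} := by
      intro x hx hfx
      exact hx (by rw [hfx])
    have := measure_mono_null hsub h0
    filter_upwards [measure_eq_zero_iff_ae_notMem.mp this] with x hx
    simpa using not_not.mp hx
  -- conditional kernel
  have hdisint : ν ⊗ₘ ρ.condKernel = ρ := by
    rw [← hfst]; exact ρ.disintegrate _
  have hbindCK : ν.bind ρ.condKernel = μ := by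
    ext s hs
    rw [Measure.bind_apply hs (ρ.condKernel).measurable.aemeasurable]
    have h1 : (ν ⊗ₘ ρ.condKernel) (Prod.snd ⁻¹' s) = ∫⁻ y, ρ.condKernel y s ∂ν := by
      rw [Measure.compProd_apply (measurable_snd hs)]
      rfl
    rw [← h1, hdisint, hρ, Measure.map_apply hm (measurable_snd hs)]
    rfl
  have hdirCK : ∀ᵐ y ∂ν, (ρ.condKernel y).map f = Measure.dirac y := by
    have hint : ∫⁻ y, ρ.condKernel y (Prod.mk y ⁻¹' {p : Y × X | f p.2 = p.1}ᶜ) ∂ν = 0 := by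
      rw [← Measure.compProd_apply hs₀.compl, hdisint]
      exact hρs₀
    have hmeas : Measurable fun y => ρ.condKernel y
        (Prod.mk y ⁻¹' {p : Y × X | f p.2 = p.1}ᶜ) :=
      Kernel.measurable_kernel_prodMk_left hs₀.compl
    have hae := (lintegral_eq_zero_iff hmeas).mp hint
    filter_upwards [hae] with y hy
    refine aux_map_eq_dirac hf ?_
    convert hy using 2
    · ext x; simp
    · rfl
  refine ⟨⟨fun y => ρ.condKernel y, ρ.condKernel.measurable, fun y => inferInstance,
      hbindCK, hdirCK⟩, ?_⟩
  intro g₁ g₂ hg₁m hg₁P hg₁b hg₁d hg₂m hg₂P hg₂b hg₂d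
  set κ₁ : Kernel Y X := ⟨g₁, hg₁m⟩ with hκ₁
  set κ₂ : Kernel Y X := ⟨g₂, hg₂m⟩ with hκ₂
  have hκ₁M : IsMarkovKernel κ₁ := ⟨fun y => hg₁P y⟩
  have hκ₂M : IsMarkovKernel κ₂ := ⟨fun y => hg₂P y⟩
  have h₁ : ν ⊗ₘ κ₁ = ρ := key κ₁ hκ₁M hg₁b hg₁d
  have h₂ : ν ⊗ₘ κ₂ = ρ := key κ₂ hκ₂M hg₂b hg₂d
  have hu₁ : ∀ᵐ y ∂ρ.fst, κ₁ y = ρ.condKernel y :=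
    eq_condKernel_of_measure_eq_compProd κ₁ (by rw [hfst, h₁])
  have hu₂ : ∀ᵐ y ∂ρ.fst, κ₂ y = ρ.condKernel y :=
    eq_condKernel_of_measure_eq_compProd κ₂ (by rw [hfst, h₂])
  rw [hfst] at hu₁ hu₂
  filter_upwards [hu₁, hu₂] with y h1 h2
  exact h1.trans h2.symm
end

section
/- (Disintegration computes conditional expectation) Let X and Y be nonempty standard Borel spaces, μ a probability measure on X, f : X → Y a measurable map, ν = μ.map f, and let g : Y ⇸ X be a disintegration of μ along f, i.e. a Markov kernel with ν.bind g = μ and (g y).map f = Dirac(y) for ν-almost every y. Then for every μ-integrable measurable function φ : X → ℝ, the function x ↦ ∫_X φ d(g (f x)) equals μ-almost everywhere the conditional expectation of φ with respect to the sub-σ-algebra σ(f) = f⁻¹(Borel(Y)) of X. -/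
open MeasureTheory ProbabilityTheory

/-- A disintegration of `μ` along `f` computes the conditional expectation with
respect to the σ-algebra generated by `f`. -/
theorem disintegration_condexp
    {X Y : Type*}
    [MeasurableSpace X] [StandardBorelSpace X] [Nonempty X]
    [MeasurableSpace Y] [StandardBorelSpace Y] [Nonempty Y]
    (μ : Measure X) [IsProbabilityMeasure μ] (f : X → Y) (hf : Measurable f)
    (g : Y → Measure X) (hg : Measurable g) (hgP : ∀ y, IsProbabilityMeasure (g y))
    (hbind : (μ.map f).bind g = μ)
    (hdirac : ∀ᵐ y ∂(μ.map f), (g y).map f = Measure.dirac y)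
    (φ : X → ℝ) (hφ : Measurable φ) (hint : Integrable φ μ) :
    (fun x => ∫ z, φ z ∂(g (f x)))
      =ᵐ[μ] μ[φ | MeasurableSpace.comap f inferInstance] := by
  set ν := μ.map f with hν
  set κ : Kernel Y X := ⟨g, hg⟩ with hκ
  haveI : IsMarkovKernel κ := ⟨fun y => hgP y⟩
  haveI : IsProbabilityMeasure ν := Measure.isProbabilityMeasure_map hf.aemeasurable
  have hκa : ∀ y, κ y = g y := fun _ => rfl
  have hsnd : (ν ⊗ₘ κ).snd = μ := by
    rw [← hbind]
    ext s hs
    rw [Measure.snd_apply hs, Measure.compProd_apply (measurable_snd hs),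
      Measure.bind_apply hs hg.aemeasurable]
    rfl
  have hm : MeasurableSpace.comap f inferInstance ≤ (inferInstance : MeasurableSpace X) :=
    hf.comap_le
  haveI : SigmaFinite (μ.trim hm) := by
    have : IsFiniteMeasure (μ.trim hm) := isFiniteMeasure_trim hm
    infer_instance
  set F : Y → ℝ := fun y => ∫ x, φ x ∂(g y) with hF
  have hFsm : StronglyMeasurable F :=
    MeasureTheory.StronglyMeasurable.integral_kernel_prod_right (κ := κ)
      (f := fun _ x => φ x) ((hφ.comp measurable_snd).stronglyMeasurable)
  -- support
  have hsupp : ∀ᵐ y ∂ν, ∀ᵐ x ∂(g y), f x = y := by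
    filter_upwards [hdirac] with y hy
    rw [ae_iff]
    have h0 : (g y).map f {y}ᶜ = 0 := by rw [hy]; simp
    rw [Measure.map_apply hf (measurableSet_singleton y).compl] at h0
    convert h0 using 2
    ext x; simp
  -- integrability on compProd
  have hint2 : Integrable (fun p : Y × X => φ p.2) (ν ⊗ₘ κ) := by
    have h := hint
    rw [← hsnd, Measure.snd] at h
    exact (integrable_map_measure hφ.aestronglyMeasurable measurable_snd.aemeasurable).mp h
  have hci := (Measure.integrable_compProd_iff
    ((hφ.comp measurable_snd).aestronglyMeasurable)).mp hint2
  have haeInt : ∀ᵐ y ∂ν, Integrable φ (g y) := hci.1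
  have hFint : Integrable F ν := by
    refine hci.2.mono hFsm.aestronglyMeasurable ?_
    filter_upwards with y
    exact (norm_integral_le_integral_norm _).trans (le_abs_self _)
  have hψint : Integrable (fun x => F (f x)) μ := by
    have := (integrable_map_measure hFsm.aestronglyMeasurable hf.aemeasurable).mp hFint
    exact this
  -- key integral identity
  have hkey : ∀ B : Set Y, MeasurableSet B →
      ∫ x in f ⁻¹' B, φ x ∂μ = ∫ y in B, F y ∂ν := by
    intro B hB
    have hpre : MeasurableSet (f ⁻¹' B) := hf hB
    have hindInt : Integrable (fun p : Y × X => (f ⁻¹' B).indicator φ p.2) (ν ⊗ₘ κ) := by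
      have : (fun p : Y × X => (f ⁻¹' B).indicator φ p.2)
          = (Prod.snd ⁻¹' (f ⁻¹' B)).indicator (fun p : Y × X => φ p.2) := by
        funext p
        rfl
      rw [this]
      exact hint2.indicator (measurable_snd hpre)
    calc ∫ x in f ⁻¹' B, φ x ∂μ
        = ∫ x, (f ⁻¹' B).indicator φ x ∂μ := (integral_indicator hpre).symm
      _ = ∫ p : Y × X, (f ⁻¹' B).indicator φ p.2 ∂(ν ⊗ₘ κ) := by
          rw [← hsnd, Measure.snd,
            integral_map measurable_snd.aemeasurable
              (hφ.indicator hpre).aestronglyMeasurable]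
      _ = ∫ y, ∫ x, (f ⁻¹' B).indicator φ x ∂(κ y) ∂ν := Measure.integral_compProd hindInt
      _ = ∫ y, B.indicator F y ∂ν := by
          refine integral_congr_ae ?_
          filter_upwards [hsupp, haeInt] with y hy hInt
          by_cases hyB : y ∈ B
          · rw [Set.indicator_of_mem hyB]
            rw [hκa]
            refine integral_congr_ae ?_
            filter_upwards [hy] with x hx
            rw [Set.indicator_of_mem (by simp [Set.mem_preimage, hx, hyB])]
          · rw [Set.indicator_of_notMem hyB, hκa]
            rw [← integral_zero (X) ℝ (μ := g y)]
            refine integral_congr_ae ?_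
            filter_upwards [hy] with x hx
            rw [Set.indicator_of_notMem (by simp [Set.mem_preimage, hx, hyB])]
      _ = ∫ y in B, F y ∂ν := integral_indicator hB
  refine ae_eq_condExp_of_forall_setIntegral_eq hm hint ?_ ?_ ?_
  · intro s hs _
    exact hψint.integrableOn
  · intro s hs _
    obtain ⟨B, hB, rfl⟩ := hs
    have hB' : MeasurableSet B := hB
    rw [hkey B hB', ← setIntegral_map hB' hFsm.aestronglyMeasurable hf.aemeasurable]
  · exact MeasureTheory.StronglyMeasurable.aestronglyMeasurable
      (hFsm.comp_measurable (measurable_iff_comap_le.mpr le_rfl))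
end

section
/- (Existence and uniqueness of Bayesian inverses) Let X and Y be nonempty standard Borel spaces, f : X ⇸ Y a Markov kernel, μ a probability measure on X, and ν = μ.bind f. Then there exists a Markov kernel g : Y ⇸ X such that ν.bind g = μ and, for all measurable sets A ⊆ X and B ⊆ Y, ∫_A (f x)(B) dμ(x) = ∫_B (g y)(A) dν(y). Moreover, any two Markov kernels satisfying these equations agree at ν-almost every y ∈ Y. -/
open MeasureTheory ProbabilityTheory

/-- Existence and uniqueness of Bayesian inverses of Markov kernels between
standard Borel spaces. -/
theorem bayesian_inverse_exists_unique
    {X Y : Type*}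
    [MeasurableSpace X] [StandardBorelSpace X] [Nonempty X]
    [MeasurableSpace Y] [StandardBorelSpace Y] [Nonempty Y]
    (f : X → Measure Y) (hf : Measurable f) (hfP : ∀ x, IsProbabilityMeasure (f x))
    (μ : Measure X) [IsProbabilityMeasure μ] :
    (∃ g : Y → Measure X, Measurable g ∧ (∀ y, IsProbabilityMeasure (g y)) ∧
        (μ.bind f).bind g = μ ∧
        ∀ (A : Set X) (B : Set Y), MeasurableSet A → MeasurableSet B →
          ∫⁻ x in A, f x B ∂μ = ∫⁻ y in B, g y A ∂(μ.bind f)) ∧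
    (∀ g₁ g₂ : Y → Measure X,
      Measurable g₁ → (∀ y, IsProbabilityMeasure (g₁ y)) →
        (μ.bind f).bind g₁ = μ →
        (∀ (A : Set X) (B : Set Y), MeasurableSet A → MeasurableSet B →
          ∫⁻ x in A, f x B ∂μ = ∫⁻ y in B, g₁ y A ∂(μ.bind f)) →
      Measurable g₂ → (∀ y, IsProbabilityMeasure (g₂ y)) →
        (μ.bind f).bind g₂ = μ →
        (∀ (A : Set X) (B : Set Y), MeasurableSet A → MeasurableSet B →
          ∫⁻ x in A, f x B ∂μ = ∫⁻ y in B, g₂ y A ∂(μ.bind f)) →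
      ∀ᵐ y ∂(μ.bind f), g₁ y = g₂ y) := by
  classical
  set ν := μ.bind f with hν
  have hνP : IsProbabilityMeasure ν := by
    constructor
    rw [hν, Measure.bind_apply MeasurableSet.univ hf.aemeasurable]
    simp [fun x => (hfP x).measure_univ]
  let κ : Kernel X Y := ⟨f, hf⟩
  have hκM : IsMarkovKernel κ := ⟨hfP⟩
  set ρ : Measure (Y × X) := (μ ⊗ₘ κ).map Prod.swap with hρdef
  have hρ_prod : ∀ (A : Set X) (B : Set Y), MeasurableSet A → MeasurableSet B →
      ρ (B ×ˢ A) = ∫⁻ x in A, f x B ∂μ := by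
    intro A B hA hB
    rw [hρdef, Measure.map_apply measurable_swap (hB.prod hA)]
    have hsw : Prod.swap ⁻¹' (B ×ˢ A) = A ×ˢ B := by
      ext p; simp [Set.mem_prod, and_comm]
    rw [hsw, Measure.compProd_apply_prod hA hB]
    rfl
  have hρ_fin : IsFiniteMeasure ρ := by
    constructor
    rw [hρdef]
    rw [Measure.map_apply measurable_swap MeasurableSet.univ]
    simp only [Set.preimage_univ]
    exact measure_lt_top _ _
  have hρ_fst : ρ.fst = ν := by
    ext s hs
    rw [Measure.fst_apply hs, hν, Measure.bind_apply hs hf.aemeasurable]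
    have : Prod.fst ⁻¹' s = s ×ˢ (Set.univ : Set X) := by ext p; simp
    rw [this, hρ_prod _ _ MeasurableSet.univ hs, Measure.restrict_univ]
  -- any Markov kernel g satisfying the integral equation disintegrates ρ
  have hdisint : ∀ (g : Y → Measure X) (hg : Measurable g), (∀ y, IsProbabilityMeasure (g y)) →
      (∀ (A : Set X) (B : Set Y), MeasurableSet A → MeasurableSet B →
        ∫⁻ x in A, f x B ∂μ = ∫⁻ y in B, g y A ∂ν) →
      ρ = ν ⊗ₘ (⟨g, hg⟩ : Kernel Y X) := by
    intro g hg hgP hgeq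
    have hKg : IsMarkovKernel (⟨g, hg⟩ : Kernel Y X) := ⟨hgP⟩
    refine ext_of_generate_finite _ generateFrom_prod.symm isPiSystem_prod ?_ ?_
    · rintro s ⟨B, hB, A, hA, rfl⟩
      rw [hρ_prod A B hA hB, Measure.compProd_apply_prod hB hA, hgeq A B hA hB]
      rfl
    · have h1 : ρ Set.univ = 1 := by
        have := hρ_prod Set.univ Set.univ MeasurableSet.univ MeasurableSet.univ
        simp only [Set.univ_prod_univ] at this
        rw [this]
        simp [fun x => (hfP x).measure_univ]
      have h2 : (ν ⊗ₘ (⟨g, hg⟩ : Kernel Y X)) Set.univ = 1 := measure_univ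
      rw [h1, h2]
  constructor
  · -- existence: conditional kernel of ρ
    refine ⟨fun y => ρ.condKernel y, ρ.condKernel.measurable, fun y => inferInstance, ?_, ?_⟩
    · have hcomp : ν ⊗ₘ ρ.condKernel = ρ := by
        rw [← hρ_fst]; exact ρ.disintegrate _
      ext s hs
      rw [Measure.bind_apply hs ρ.condKernel.measurable.aemeasurable]
      have : ∫⁻ y, ρ.condKernel y s ∂ν = (ν ⊗ₘ ρ.condKernel) (Set.univ ×ˢ s) := by
        rw [Measure.compProd_apply_prod MeasurableSet.univ hs, Measure.restrict_univ]
      rw [this, hcomp, hρ_prod s Set.univ hs MeasurableSet.univ]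
      simp [fun x => (hfP x).measure_univ]
    · intro A B hA hB
      have hcomp : ν ⊗ₘ ρ.condKernel = ρ := by
        rw [← hρ_fst]; exact ρ.disintegrate _
      calc ∫⁻ x in A, f x B ∂μ = ρ (B ×ˢ A) := (hρ_prod A B hA hB).symm
        _ = (ν ⊗ₘ ρ.condKernel) (B ×ˢ A) := by rw [hcomp]
        _ = ∫⁻ y in B, ρ.condKernel y A ∂ν := Measure.compProd_apply_prod hB hA
  · -- uniqueness
    intro g₁ g₂ hg₁ hg₁P _ hg₁eq hg₂ hg₂P _ hg₂eq
    have hK₁ : IsMarkovKernel (⟨g₁, hg₁⟩ : Kernel Y X) := ⟨hg₁P⟩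
    have hK₂ : IsMarkovKernel (⟨g₂, hg₂⟩ : Kernel Y X) := ⟨hg₂P⟩
    have h₁ : ρ = ρ.fst ⊗ₘ (⟨g₁, hg₁⟩ : Kernel Y X) := by
      rw [hρ_fst]; exact hdisint g₁ hg₁ hg₁P hg₁eq
    have h₂ : ρ = ρ.fst ⊗ₘ (⟨g₂, hg₂⟩ : Kernel Y X) := by
      rw [hρ_fst]; exact hdisint g₂ hg₂ hg₂P hg₂eq
    have e₁ := eq_condKernel_of_measure_eq_compProd (ρ := ρ) (⟨g₁, hg₁⟩ : Kernel Y X) h₁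
    have e₂ := eq_condKernel_of_measure_eq_compProd (ρ := ρ) (⟨g₂, hg₂⟩ : Kernel Y X) h₂
    rw [hρ_fst] at e₁ e₂
    filter_upwards [e₁, e₂] with y hy₁ hy₂
    have : g₁ y = (⟨g₁, hg₁⟩ : Kernel Y X) y := rfl
    rw [this, hy₁]
    have : g₂ y = (⟨g₂, hg₂⟩ : Kernel Y X) y := rfl
    rw [this, hy₂]
end

section
/- (Bayesian inversion is functorial) Let X, Y, Z be nonempty standard Borel spaces, μ a probability measure on X, f : X ⇸ Y and h : Y ⇸ Z Markov kernels, ν = μ.bind f and ρ = ν.bind h. If f† : Y ⇸ X is a Bayesian inverse of f with respect to μ and h† : Z ⇸ Y is a Bayesian inverse of h with respect to ν, then the composite kernel f† ∘ h† : Z ⇸ X is a Bayesian inverse of h ∘ f : X ⇸ Z with respect to μ. -/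
open MeasureTheory
open scoped ENNReal

/-- `g` is a Bayesian inverse of the Markov kernel `f` with respect to the
probability measure `μ` (with `ν = μ.bind f`). -/
def IsBayesInv {X Y : Type*} [MeasurableSpace X] [MeasurableSpace Y]
    (μ : Measure X) (f : X → Measure Y) (g : Y → Measure X) : Prop :=
  Measurable g ∧ (∀ y, IsProbabilityMeasure (g y)) ∧
  (μ.bind f).bind g = μ ∧
  ∀ (A : Set X) (B : Set Y), MeasurableSet A → MeasurableSet B →
    ∫⁻ x in A, f x B ∂μ = ∫⁻ y in B, g y A ∂(μ.bind f)

open Measure in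
/-- Extension of the Bayes condition from indicator functions to all measurable
`ℝ≥0∞`-valued functions. -/
lemma lintegral_bayes_aux {X Y : Type*} [MeasurableSpace X] [MeasurableSpace Y]
    (μ : Measure X) (ν : Measure Y) (f : X → Measure Y) (hf : Measurable f)
    (g : Y → Measure X) (hg : Measurable g)
    (hbayes : ∀ (A : Set X) (B : Set Y), MeasurableSet A → MeasurableSet B →
      ∫⁻ x in A, f x B ∂μ = ∫⁻ y in B, g y A ∂ν)
    {A : Set X} (hA : MeasurableSet A) :
    ∀ ⦃φ : Y → ℝ≥0∞⦄, Measurable φ →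
      ∫⁻ x in A, ∫⁻ y, φ y ∂(f x) ∂μ = ∫⁻ y, φ y * g y A ∂ν := by
  have hgA : Measurable fun y => g y A := (measurable_coe hA).comp hg
  refine Measurable.ennreal_induction (motive := fun φ =>
    ∫⁻ x in A, ∫⁻ y, φ y ∂(f x) ∂μ = ∫⁻ y, φ y * g y A ∂ν) ?_ ?_ ?_
  · intro c B hB
    have h1 : ∀ x, ∫⁻ y, B.indicator (fun _ => c) y ∂(f x) = c * f x B := fun x =>
      lintegral_indicator_const hB c
    simp only [h1]
    have hfB : Measurable fun x => f x B := (measurable_coe hB).comp hf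
    rw [lintegral_const_mul c hfB, hbayes A B hA hB]
    have h2 : ∀ y, B.indicator (fun _ => c) y * g y A
        = B.indicator (fun y => c * g y A) y := by
      intro y
      by_cases hy : y ∈ B <;> simp [hy]
    simp only [h2]
    rw [lintegral_indicator hB, lintegral_const_mul c hgA]
  · intro φ ψ _ hφ hψ ihφ ihψ
    have hφf : Measurable fun x => ∫⁻ y, φ y ∂(f x) :=
      (measurable_lintegral hφ).comp hf
    simp only [Pi.add_apply]
    have h1 : ∀ x, ∫⁻ y, φ y + ψ y ∂(f x)
        = (∫⁻ y, φ y ∂(f x)) + ∫⁻ y, ψ y ∂(f x) := fun x => lintegral_add_left hφ _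
    have h2 : ∀ y, (φ y + ψ y) * g y A = φ y * g y A + ψ y * g y A := fun y =>
      add_mul _ _ _
    simp only [h1, h2]
    rw [lintegral_add_left hφf, lintegral_add_left (f := fun y => φ y * g y A) (hφ.mul hgA), ihφ, ihψ]
  · intro φ hφ hmono ih
    have hφf : ∀ n, Measurable fun x => ∫⁻ y, φ n y ∂(f x) := fun n =>
      (measurable_lintegral (hφ n)).comp hf
    have h1 : ∀ x, ∫⁻ y, ⨆ n, φ n y ∂(f x) = ⨆ n, ∫⁻ y, φ n y ∂(f x) := fun x =>
      lintegral_iSup hφ (fun i j hij y => hmono hij y)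
    simp only [h1]
    rw [lintegral_iSup hφf (fun i j hij x =>
      lintegral_mono (fun y => hmono hij y))]
    have h2 : ∀ y, (⨆ n, φ n y) * g y A = ⨆ n, φ n y * g y A := fun y =>
      ENNReal.iSup_mul _ _
    simp only [h2]
    rw [lintegral_iSup (f := fun n y => φ n y * g y A) (fun n => (hφ n).mul hgA)
      (fun i j hij y => mul_le_mul_left (hmono hij y) _)]
    exact iSup_congr ih

/-- Bayesian inversion is functorial: the composite of Bayesian inverses is a
Bayesian inverse of the composite. -/
theorem bayesian_inverse_comp
    {X Y Z : Type*}
    [MeasurableSpace X] [StandardBorelSpace X] [Nonempty X]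
    [MeasurableSpace Y] [StandardBorelSpace Y] [Nonempty Y]
    [MeasurableSpace Z] [StandardBorelSpace Z] [Nonempty Z]
    (μ : Measure X) [IsProbabilityMeasure μ]
    (f : X → Measure Y) (hf : Measurable f) (hfP : ∀ x, IsProbabilityMeasure (f x))
    (h : Y → Measure Z) (hh : Measurable h) (hhP : ∀ y, IsProbabilityMeasure (h y))
    (fd : Y → Measure X) (hfd : IsBayesInv μ f fd)
    (hd : Z → Measure Y) (hhd : IsBayesInv (μ.bind f) h hd) :
    IsBayesInv μ (fun x => (f x).bind h) (fun z => (hd z).bind fd) := by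
  obtain ⟨hfd_m, hfd_P, hfd_bind, hfd_bayes⟩ := hfd
  obtain ⟨hhd_m, hhd_P, hhd_bind, hhd_bayes⟩ := hhd
  set ν := μ.bind f with hν
  set ρ := ν.bind h with hρ
  have hcomp_m : Measurable fun z => (hd z).bind fd :=
    (Measure.measurable_bind' hfd_m).comp hhd_m
  have hμcomp : μ.bind (fun x => (f x).bind h) = ρ := (Measure.bind_bind hf.aemeasurable hh.aemeasurable).symm
  refine ⟨hcomp_m, ?_, ?_, ?_⟩
  · intro z
    constructor
    rw [Measure.bind_apply MeasurableSet.univ hfd_m.aemeasurable]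
    have : ∀ y, fd y Set.univ = 1 := fun y => (hfd_P y).measure_univ
    simp only [this, lintegral_one]
    exact (hhd_P z).measure_univ
  · rw [hμcomp, ← Measure.bind_bind hhd_m.aemeasurable hfd_m.aemeasurable, hhd_bind, hfd_bind]
  · intro A B hA hB
    rw [hμcomp]
    have hl : ∀ x, ((f x).bind h) B = ∫⁻ y, h y B ∂(f x) := fun x =>
      Measure.bind_apply hB hh.aemeasurable
    have hr : ∀ z, ((hd z).bind fd) A = ∫⁻ y, fd y A ∂(hd z) := fun z =>
      Measure.bind_apply hA hfd_m.aemeasurable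
    simp only [hl, hr]
    have e1 := lintegral_bayes_aux μ ν f hf fd hfd_m hfd_bayes hA
      (φ := fun y => h y B) ((Measure.measurable_coe hB).comp hh)
    have hbayes' : ∀ (C : Set Z) (B' : Set Y), MeasurableSet C → MeasurableSet B' →
        ∫⁻ z in C, hd z B' ∂ρ = ∫⁻ y in B', h y C ∂ν := fun C B' hC hB' =>
      (hhd_bayes B' C hB' hC).symm
    have e2 := lintegral_bayes_aux ρ ν hd hhd_m h hh hbayes' hB
      (φ := fun y => fd y A) ((Measure.measurable_coe hA).comp hfd_m)
    rw [e1, show (∫⁻ y, h y B * fd y A ∂ν) = ∫⁻ y, fd y A * h y B ∂ν from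
      lintegral_congr fun y => mul_comm _ _]
    exact e2.symm
end

section
/- (Bayesian inversion respects the monoidal product) Let X₁, Y₁, X₂, Y₂ be nonempty standard Borel spaces, μᵢ probability measures on Xᵢ, fᵢ : Xᵢ ⇸ Yᵢ Markov kernels with νᵢ = μᵢ.bind fᵢ, for i = 1, 2. Let f₁ ⊗ f₂ : X₁ × X₂ ⇸ Y₁ × Y₂ denote the product kernel (x₁, x₂) ↦ (f₁ x₁) ⊗ (f₂ x₂). Then (μ₁ ⊗ μ₂).bind (f₁ ⊗ f₂) = ν₁ ⊗ ν₂, and if f₁† and f₂† are Bayesian inverses of f₁ and f₂ with respect to μ₁ and μ₂ respectively, then f₁† ⊗ f₂† is a Bayesian inverse of f₁ ⊗ f₂ with respect to μ₁ ⊗ μ₂. -/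
open MeasureTheory ProbabilityTheory Set

section Aux

variable {α β γ δ : Type*} [MeasurableSpace α] [MeasurableSpace β]
  [MeasurableSpace γ] [MeasurableSpace δ]

lemma aux_measurable_prod {f : α → Measure γ} {g : β → Measure δ}
    (hf : Measurable f) (hg : Measurable g)
    (hfP : ∀ x, IsProbabilityMeasure (f x)) (hgP : ∀ x, IsProbabilityMeasure (g x)) :
    Measurable (fun p : α × β => (f p.1).prod (g p.2)) := by
  haveI : IsMarkovKernel (⟨f, hf⟩ : Kernel α γ) := ⟨hfP⟩
  haveI : IsMarkovKernel (⟨g, hg⟩ : Kernel β δ) := ⟨hgP⟩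
  have h := (Kernel.comap (⟨f, hf⟩ : Kernel α γ) Prod.fst measurable_fst ×ₖ
    Kernel.comap (⟨g, hg⟩ : Kernel β δ) Prod.snd measurable_snd).measurable
  have heq : (fun p : α × β => (f p.1).prod (g p.2)) =
      (Kernel.comap (⟨f, hf⟩ : Kernel α γ) Prod.fst measurable_fst ×ₖ
        Kernel.comap (⟨g, hg⟩ : Kernel β δ) Prod.snd measurable_snd) := by
    funext p
    rw [Kernel.prod_apply, Kernel.comap_apply, Kernel.comap_apply]
    rfl
  rw [heq]; exact h

lemma aux_bind_prob {μ : Measure α} [IsProbabilityMeasure μ] {f : α → Measure γ}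
    (hf : Measurable f) (hfP : ∀ x, IsProbabilityMeasure (f x)) :
    IsProbabilityMeasure (μ.bind f) := by
  constructor
  rw [Measure.bind_apply MeasurableSet.univ hf.aemeasurable]
  rw [lintegral_congr fun x => (hfP x).measure_univ, lintegral_one, measure_univ]

lemma aux_bind_prod {μ : Measure α} {ν : Measure β}
    [IsProbabilityMeasure μ] [IsProbabilityMeasure ν]
    {f : α → Measure γ} {g : β → Measure δ} (hf : Measurable f) (hg : Measurable g)
    (hfP : ∀ x, IsProbabilityMeasure (f x)) (hgP : ∀ x, IsProbabilityMeasure (g x)) :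
    (μ.prod ν).bind (fun p : α × β => (f p.1).prod (g p.2)) = (μ.bind f).prod (ν.bind g) := by
  haveI := aux_bind_prob (μ := μ) hf hfP
  haveI := aux_bind_prob (μ := ν) hg hgP
  refine (Measure.prod_eq (μ := μ.bind f) (ν := ν.bind g)
    (μν := (μ.prod ν).bind (fun p : α × β => (f p.1).prod (g p.2))) fun s t hs ht => ?_).symm
  rw [Measure.bind_apply (hs.prod ht) (aux_measurable_prod hf hg hfP hgP).aemeasurable,
    Measure.bind_apply hs hf.aemeasurable, Measure.bind_apply ht hg.aemeasurable]
  have hcongr : ∀ p : α × β, ((f p.1).prod (g p.2)) (s ×ˢ t) = f p.1 s * g p.2 t := by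
    intro p
    haveI := hfP p.1; haveI := hgP p.2
    exact Measure.prod_prod s t
  rw [lintegral_congr hcongr,
    lintegral_prod_mul (f := fun x => f x s) (g := fun x => g x t)
      ((Measure.measurable_coe hs).comp hf).aemeasurable
      ((Measure.measurable_coe ht).comp hg).aemeasurable]

lemma aux_ext4 (μ ν : Measure ((α × β) × (γ × δ))) [IsFiniteMeasure μ] [IsFiniteMeasure ν]
    (huniv : μ univ = ν univ)
    (h : ∀ ⦃a : Set α⦄ ⦃b : Set β⦄ ⦃c : Set γ⦄ ⦃d : Set δ⦄, MeasurableSet a → MeasurableSet b →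
      MeasurableSet c → MeasurableSet d →
      μ ((a ×ˢ b) ×ˢ (c ×ˢ d)) = ν ((a ×ˢ b) ×ˢ (c ×ˢ d))) : μ = ν := by
  have hspan1 : IsCountablySpanning
      (image2 (· ×ˢ ·) {s : Set α | MeasurableSet s} {s : Set β | MeasurableSet s}) :=
    ⟨fun _ => univ ×ˢ univ,
      fun _ => mem_image2_of_mem MeasurableSet.univ MeasurableSet.univ,
      by rw [Set.iUnion_const, Set.univ_prod_univ]⟩
  have hspan2 : IsCountablySpanning
      (image2 (· ×ˢ ·) {s : Set γ | MeasurableSet s} {s : Set δ | MeasurableSet s}) :=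
    ⟨fun _ => univ ×ˢ univ,
      fun _ => mem_image2_of_mem MeasurableSet.univ MeasurableSet.univ,
      by rw [Set.iUnion_const, Set.univ_prod_univ]⟩
  refine ext_of_generate_finite _
    (generateFrom_eq_prod generateFrom_prod generateFrom_prod hspan1 hspan2).symm
    (isPiSystem_prod.prod isPiSystem_prod) ?_ huniv
  rintro _ ⟨_, ⟨a, ha, b, hb, rfl⟩, _, ⟨c, hc, d, hd, rfl⟩, rfl⟩
  exact h ha hb hc hd

end Aux

/-- Bayesian inversion respects the monoidal (product) structure. -/
theorem bayesian_inverse_prod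
    {X₁ Y₁ X₂ Y₂ : Type*}
    [MeasurableSpace X₁] [StandardBorelSpace X₁] [Nonempty X₁]
    [MeasurableSpace Y₁] [StandardBorelSpace Y₁] [Nonempty Y₁]
    [MeasurableSpace X₂] [StandardBorelSpace X₂] [Nonempty X₂]
    [MeasurableSpace Y₂] [StandardBorelSpace Y₂] [Nonempty Y₂]
    (μ₁ : Measure X₁) [IsProbabilityMeasure μ₁]
    (μ₂ : Measure X₂) [IsProbabilityMeasure μ₂]
    (f₁ : X₁ → Measure Y₁) (hf₁ : Measurable f₁)
    (hf₁P : ∀ x, IsProbabilityMeasure (f₁ x))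
    (f₂ : X₂ → Measure Y₂) (hf₂ : Measurable f₂)
    (hf₂P : ∀ x, IsProbabilityMeasure (f₂ x))
    (fd₁ : Y₁ → Measure X₁) (fd₂ : Y₂ → Measure X₂) :
    (μ₁.prod μ₂).bind (fun x : X₁ × X₂ => (f₁ x.1).prod (f₂ x.2))
        = (μ₁.bind f₁).prod (μ₂.bind f₂) ∧
    (IsBayesInv μ₁ f₁ fd₁ → IsBayesInv μ₂ f₂ fd₂ →
      IsBayesInv (μ₁.prod μ₂) (fun x : X₁ × X₂ => (f₁ x.1).prod (f₂ x.2))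
        (fun y : Y₁ × Y₂ => (fd₁ y.1).prod (fd₂ y.2))) := by
  have hpart1 := aux_bind_prod hf₁ hf₂ hf₁P hf₂P (μ := μ₁) (ν := μ₂)
  refine ⟨hpart1, fun h₁ h₂ => ?_⟩
  obtain ⟨hg₁, hg₁P, hinv₁, hsym₁⟩ := h₁
  obtain ⟨hg₂, hg₂P, hinv₂, hsym₂⟩ := h₂
  haveI := aux_bind_prob hf₁ hf₁P (μ := μ₁)
  haveI := aux_bind_prob hf₂ hf₂P (μ := μ₂)
  have hK : Measurable (fun x : X₁ × X₂ => (f₁ x.1).prod (f₂ x.2)) :=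
    aux_measurable_prod hf₁ hf₂ hf₁P hf₂P
  have hG : Measurable (fun y : Y₁ × Y₂ => (fd₁ y.1).prod (fd₂ y.2)) :=
    aux_measurable_prod hg₁ hg₂ hg₁P hg₂P
  have hGP : ∀ y : Y₁ × Y₂, IsProbabilityMeasure ((fd₁ y.1).prod (fd₂ y.2)) := by
    intro y; haveI := hg₁P y.1; haveI := hg₂P y.2; infer_instance
  refine ⟨hG, hGP, ?_, ?_⟩
  · rw [hpart1, aux_bind_prod hg₁ hg₂ hg₁P hg₂P, hinv₁, hinv₂]
  · -- the symmetry condition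
    intro A B hA hB
    -- kernels
    set Kker : Kernel (X₁ × X₂) (Y₁ × Y₂) :=
      ⟨fun x : X₁ × X₂ => (f₁ x.1).prod (f₂ x.2), hK⟩ with hKker
    set Gker : Kernel (Y₁ × Y₂) (X₁ × X₂) :=
      ⟨fun y : Y₁ × Y₂ => (fd₁ y.1).prod (fd₂ y.2), hG⟩ with hGker
    haveI : IsMarkovKernel Kker := ⟨fun x => by
      haveI := hf₁P x.1; haveI := hf₂P x.2
      exact (inferInstance : IsProbabilityMeasure ((f₁ x.1).prod (f₂ x.2)))⟩
    haveI : IsMarkovKernel Gker := ⟨hGP⟩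
    set Φ : Measure ((X₁ × X₂) × (Y₁ × Y₂)) := (μ₁.prod μ₂) ⊗ₘ Kker with hΦ
    set Ψ : Measure ((Y₁ × Y₂) × (X₁ × X₂)) :=
      ((μ₁.bind f₁).prod (μ₂.bind f₂)) ⊗ₘ Gker with hΨ
    haveI : IsProbabilityMeasure Φ := by
      constructor; rw [hΦ, Measure.compProd_apply_univ]; simp
    haveI : IsProbabilityMeasure Ψ := by
      constructor; rw [hΨ, Measure.compProd_apply_univ]; simp
    have hmain : Φ = Measure.map Prod.swap Ψ := by
      haveI : IsProbabilityMeasure (Measure.map Prod.swap Ψ) :=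
        Measure.isProbabilityMeasure_map measurable_swap.aemeasurable
      refine aux_ext4 _ _ (by simp [measure_univ]) ?_
      intro A₁ A₂ B₁ B₂ hA₁ hA₂ hB₁ hB₂
      rw [Measure.map_apply measurable_swap (((hA₁.prod hA₂).prod (hB₁.prod hB₂)))]
      have hsw : Prod.swap ⁻¹' ((A₁ ×ˢ A₂) ×ˢ (B₁ ×ˢ B₂)) =
          (B₁ ×ˢ B₂) ×ˢ (A₁ ×ˢ A₂) := Set.preimage_swap_prod _ _
      rw [hsw, hΦ, hΨ, Measure.compProd_apply_prod (hA₁.prod hA₂) (hB₁.prod hB₂),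
        Measure.compProd_apply_prod (hB₁.prod hB₂) (hA₁.prod hA₂)]
      have hL : ∀ x : X₁ × X₂, Kker x (B₁ ×ˢ B₂) = f₁ x.1 B₁ * f₂ x.2 B₂ := by
        intro x; haveI := hf₁P x.1; haveI := hf₂P x.2
        exact Measure.prod_prod B₁ B₂
      have hR : ∀ y : Y₁ × Y₂, Gker y (A₁ ×ˢ A₂) = fd₁ y.1 A₁ * fd₂ y.2 A₂ := by
        intro y; haveI := hg₁P y.1; haveI := hg₂P y.2
        exact Measure.prod_prod A₁ A₂
      rw [lintegral_congr hL, lintegral_congr hR, ← Measure.prod_restrict,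
        ← Measure.prod_restrict,
        lintegral_prod_mul (f := fun x => f₁ x B₁) (g := fun x => f₂ x B₂)
          ((Measure.measurable_coe hB₁).comp hf₁).aemeasurable
          ((Measure.measurable_coe hB₂).comp hf₂).aemeasurable,
        lintegral_prod_mul (f := fun y => fd₁ y A₁) (g := fun y => fd₂ y A₂)
          ((Measure.measurable_coe hA₁).comp hg₁).aemeasurable
          ((Measure.measurable_coe hA₂).comp hg₂).aemeasurable,
        hsym₁ A₁ B₁ hA₁ hB₁, hsym₂ A₂ B₂ hA₂ hB₂]
    have e1 : ∫⁻ x in A, ((f₁ x.1).prod (f₂ x.2)) B ∂(μ₁.prod μ₂) = Φ (A ×ˢ B) := by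
      rw [hΦ, Measure.compProd_apply_prod hA hB]; rfl
    have e2 : Φ (A ×ˢ B) = Ψ (B ×ˢ A) := by
      rw [hmain, Measure.map_apply measurable_swap (hA.prod hB), Set.preimage_swap_prod]
    have e3 : Ψ (B ×ˢ A) = ∫⁻ y in B, ((fd₁ y.1).prod (fd₂ y.2)) A
        ∂((μ₁.prod μ₂).bind (fun x : X₁ × X₂ => (f₁ x.1).prod (f₂ x.2))) := by
      rw [hpart1, hΨ, Measure.compProd_apply_prod hB hA]; rfl
    rw [e1, e2, e3]
end

section
/- Let X, Y be nonempty standard Borel spaces, f : X ⇸ Y a Markov kernel, μ a probability measure on X, ν = μ.bind f, and let f† : Y ⇸ X be a Bayesian inverse of f with respect to μ. Then for every ν-integrable measurable function φ : Y → ℝ and every measurable set A ⊆ X: ∫_A (∫_Y φ d(f x)) dμ(x) = ∫_Y φ(y) · (f† y)(A) dν(y). -/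
open MeasureTheory
open scoped ENNReal NNReal

/-- Integral formula for Bayesian inverses: for every `ν`-integrable `φ` and
measurable `A`, `∫_A (∫ φ d(f x)) dμ = ∫ φ(y) · (f† y)(A) dν`. -/
theorem bayesian_inverse_integral
    {X Y : Type*}
    [MeasurableSpace X] [StandardBorelSpace X] [Nonempty X]
    [MeasurableSpace Y] [StandardBorelSpace Y] [Nonempty Y]
    (f : X → Measure Y) (hf : Measurable f) (hfP : ∀ x, IsProbabilityMeasure (f x))
    (μ : Measure X) [IsProbabilityMeasure μ]
    (fd : Y → Measure X) (hfd : IsBayesInv μ f fd)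
    (φ : Y → ℝ) (hφ : Measurable φ) (hint : Integrable φ (μ.bind f))
    (A : Set X) (hA : MeasurableSet A) :
    ∫ x in A, (∫ y, φ y ∂(f x)) ∂μ
      = ∫ y, φ y * (fd y A).toReal ∂(μ.bind f) := by
  obtain ⟨hgm, hgP, hbind, hbayes⟩ := hfd
  set ν := μ.bind f with hν
  set h : Y → ℝ≥0∞ := fun y => fd y A with hhdef
  have hh : Measurable h := (Measure.measurable_coe hA).comp hgm
  have hle1 : ∀ y, h y ≤ 1 := fun y => by
    have := hgP y; exact prob_le_one
  have hhlt : ∀ y, h y < ⊤ := fun y => lt_of_le_of_lt (hle1 y) ENNReal.one_lt_top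
  set M : Measure Y := (μ.restrict A).bind f with hMdef
  -- key measure identity
  have hM : M = ν.withDensity h := by
    ext B hB
    rw [hMdef, Measure.bind_apply hB hf.aemeasurable, withDensity_apply _ hB]
    exact hbayes A B hA hB
  have hMle : M ≤ ν := by
    refine Measure.le_iff.2 fun B hB => ?_
    rw [hMdef, hν, Measure.bind_apply hB hf.aemeasurable, Measure.bind_apply hB hf.aemeasurable]
    exact lintegral_mono' Measure.restrict_le_self le_rfl
  have hintM : Integrable φ M := hint.mono_measure hMle
  -- positive and negative parts
  set p : Y → ℝ≥0∞ := fun y => ENNReal.ofReal (φ y) with hpdef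
  set n : Y → ℝ≥0∞ := fun y => ENNReal.ofReal (-φ y) with hndef
  have hp : Measurable p := hφ.ennreal_ofReal
  have hn : Measurable n := hφ.neg.ennreal_ofReal
  have hPm : Measurable fun x => ∫⁻ y, p y ∂(f x) :=
    (Measure.measurable_lintegral hp).comp hf
  have hNm : Measurable fun x => ∫⁻ y, n y ∂(f x) :=
    (Measure.measurable_lintegral hn).comp hf
  -- bounds by the norm lintegral
  have hnorm : ∫⁻ y, ‖φ y‖₊ ∂ν < ⊤ := hint.2
  have hple : ∀ y, p y ≤ (‖φ y‖₊ : ℝ≥0∞) := fun y => by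
    rw [← enorm_eq_nnnorm, ← ofReal_norm, Real.norm_eq_abs]
    exact ENNReal.ofReal_le_ofReal (le_abs_self _)
  have hnle : ∀ y, n y ≤ (‖φ y‖₊ : ℝ≥0∞) := fun y => by
    rw [← enorm_eq_nnnorm, ← ofReal_norm, Real.norm_eq_abs]
    exact ENNReal.ofReal_le_ofReal (neg_le_abs _)
  have hpfin : ∫⁻ y, p y ∂ν < ⊤ :=
    lt_of_le_of_lt (lintegral_mono fun y => hple y) hnorm
  have hnfin : ∫⁻ y, n y ∂ν < ⊤ :=
    lt_of_le_of_lt (lintegral_mono fun y => hnle y) hnorm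
  -- restricted lintegrals of the inner positive/negative lintegrals
  have hPeq : ∫⁻ x in A, (∫⁻ y, p y ∂(f x)) ∂μ = ∫⁻ y, p y ∂M := by
    rw [hMdef, Measure.lintegral_bind hf.aemeasurable hp.aemeasurable]
  have hNeq : ∫⁻ x in A, (∫⁻ y, n y ∂(f x)) ∂μ = ∫⁻ y, n y ∂M := by
    rw [hMdef, Measure.lintegral_bind hf.aemeasurable hn.aemeasurable]
  have hPfin : ∫⁻ x in A, (∫⁻ y, p y ∂(f x)) ∂μ < ⊤ := by
    rw [hPeq]; exact lt_of_le_of_lt (lintegral_mono' hMle le_rfl) hpfin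
  have hNfin : ∫⁻ x in A, (∫⁻ y, n y ∂(f x)) ∂μ < ⊤ := by
    rw [hNeq]; exact lt_of_le_of_lt (lintegral_mono' hMle le_rfl) hnfin
  -- a.e. integrability of φ w.r.t. `f x`
  have hNormBind : ∫⁻ x, (∫⁻ y, ‖φ y‖₊ ∂(f x)) ∂μ < ⊤ := by
    rw [← Measure.lintegral_bind hf.aemeasurable hφ.nnnorm.coe_nnreal_ennreal.aemeasurable]; exact hnorm
  have haefin : ∀ᵐ x ∂μ, (∫⁻ y, ‖φ y‖₊ ∂(f x)) < ⊤ :=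
    ae_lt_top ((Measure.measurable_lintegral hφ.nnnorm.coe_nnreal_ennreal).comp hf) hNormBind.ne
  have haeint : ∀ᵐ x ∂μ, Integrable φ (f x) := by
    filter_upwards [haefin] with x hx
    exact ⟨hφ.aestronglyMeasurable, hx⟩
  have haeintA : ∀ᵐ x ∂(μ.restrict A), Integrable φ (f x) :=
    ae_restrict_of_ae haeint
  -- rewrite the inner integrals
  have heq1 : ∫ x in A, (∫ y, φ y ∂(f x)) ∂μ
      = ∫ x in A, ((∫⁻ y, p y ∂(f x)).toReal - (∫⁻ y, n y ∂(f x)).toReal) ∂μ := by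
    refine integral_congr_ae ?_
    filter_upwards [haeintA] with x hx
    exact integral_eq_lintegral_pos_part_sub_lintegral_neg_part hx
  have hintP : Integrable (fun x => (∫⁻ y, p y ∂(f x)).toReal) (μ.restrict A) :=
    integrable_toReal_of_lintegral_ne_top hPm.aemeasurable hPfin.ne
  have hintN : Integrable (fun x => (∫⁻ y, n y ∂(f x)).toReal) (μ.restrict A) :=
    integrable_toReal_of_lintegral_ne_top hNm.aemeasurable hNfin.ne
  have heq2 : ∫ x in A, ((∫⁻ y, p y ∂(f x)).toReal - (∫⁻ y, n y ∂(f x)).toReal) ∂μ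
      = (∫⁻ y, p y ∂M).toReal - (∫⁻ y, n y ∂M).toReal := by
    rw [integral_sub hintP hintN,
      integral_toReal hPm.aemeasurable (ae_lt_top hPm hPfin.ne),
      integral_toReal hNm.aemeasurable (ae_lt_top hNm hNfin.ne), hPeq, hNeq]
  have heq3 : (∫⁻ y, p y ∂M).toReal - (∫⁻ y, n y ∂M).toReal = ∫ y, φ y ∂M :=
    (integral_eq_lintegral_pos_part_sub_lintegral_neg_part hintM).symm
  have heq4 : ∫ y, φ y ∂M = ∫ y, φ y * (h y).toReal ∂ν := by
    have hcongr : ν.withDensity h = ν.withDensity (fun y => ((h y).toNNReal : ℝ≥0∞)) :=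
      withDensity_congr_ae (Filter.Eventually.of_forall fun y =>
        (ENNReal.coe_toNNReal (hhlt y).ne).symm)
    rw [hM, hcongr, integral_withDensity_eq_integral_smul hh.ennreal_toNNReal φ]
    refine integral_congr_ae (Filter.Eventually.of_forall fun y => ?_)
    simp [NNReal.smul_def, ENNReal.toReal, mul_comm]
  rw [heq1, heq2, heq3, heq4]
end

section
/- (Naturality of the Radon–Nikodym derivative) Let X, Y be nonempty standard Borel spaces, f : X ⇸ Y a Markov kernel, μ a probability measure on X, ν = μ.bind f, and let f† : Y ⇸ X be a Bayesian inverse of f with respect to μ. Let ρ be a finite measure on X that is absolutely continuous with respect to μ. Then for ν-almost every y ∈ Y, the Radon–Nikodym derivative of ρ.bind f with respect to ν satisfies d(ρ.bind f)/dν (y) = ∫_X (dρ/dμ) d(f† y). -/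
open MeasureTheory

/-- Naturality of the Radon–Nikodym derivative: for `ρ ≪ μ`,
`d(ρ.bind f)/dν = ∫ dρ/dμ d(f† y)` for `ν`-a.e. `y`. -/
theorem radonNikodym_natural
    {X Y : Type*}
    [MeasurableSpace X] [StandardBorelSpace X] [Nonempty X]
    [MeasurableSpace Y] [StandardBorelSpace Y] [Nonempty Y]
    (f : X → Measure Y) (hf : Measurable f) (hfP : ∀ x, IsProbabilityMeasure (f x))
    (μ : Measure X) [IsProbabilityMeasure μ]
    (fd : Y → Measure X) (hfd : IsBayesInv μ f fd)
    (ρ : Measure X) [IsFiniteMeasure ρ] (hac : ρ ≪ μ) :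
    ∀ᵐ y ∂(μ.bind f),
      (ρ.bind f).rnDeriv (μ.bind f) y = ∫⁻ x, ρ.rnDeriv μ x ∂(fd y) := by
  set ν := μ.bind f with hν
  have hνP : IsProbabilityMeasure ν := by
    constructor
    rw [hν, Measure.bind_apply MeasurableSet.univ hf.aemeasurable]
    simp [measure_univ]
  have hfdm : Measurable fd := hfd.1
  -- key disintegration lemma
  have key : ∀ (g : X → ENNReal), Measurable g → ∀ B : Set Y, MeasurableSet B →
      ∫⁻ x, g x * f x B ∂μ = ∫⁻ y in B, ∫⁻ x, g x ∂(fd y) ∂ν := by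
    intro g hg
    refine Measurable.ennreal_induction (motive := fun g => ∀ B : Set Y, MeasurableSet B →
        ∫⁻ x, g x * f x B ∂μ = ∫⁻ y in B, ∫⁻ x, g x ∂(fd y) ∂ν) ?_ ?_ ?_ hg
    · intro c s hs B hB
      have h1 : ∀ x, Set.indicator s (fun _ => c) x * f x B
          = Set.indicator s (fun x => c * f x B) x := by
        intro x
        by_cases hx : x ∈ s <;> simp [hx]
      have hm : Measurable fun x => f x B := (Measure.measurable_coe hB).comp hf
      simp_rw [h1]
      rw [lintegral_indicator hs, lintegral_const_mul _ hm]
      have h2 : ∀ y, ∫⁻ x, Set.indicator s (fun _ => c) x ∂(fd y) = c * fd y s := by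
        intro y
        rw [lintegral_indicator hs]
        simp [Measure.restrict_apply MeasurableSet.univ]
      simp_rw [h2]
      have hm2 : Measurable fun y => fd y s := (Measure.measurable_coe hs).comp hfdm
      rw [lintegral_const_mul _ hm2, hfd.2.2.2 s B hs hB]
    · intro g₁ g₂ _ hg₁ hg₂ ih₁ ih₂ B hB
      have hm : Measurable fun x => f x B := (Measure.measurable_coe hB).comp hf
      simp_rw [Pi.add_apply, add_mul]
      rw [lintegral_add_left (f := fun x => g₁ x * f x B) (hg₁.mul hm)]
      have h2 : ∀ y, ∫⁻ x, g₁ x + g₂ x ∂(fd y)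
          = (∫⁻ x, g₁ x ∂(fd y)) + ∫⁻ x, g₂ x ∂(fd y) := fun y =>
        lintegral_add_left hg₁ _
      simp_rw [h2]
      have hl1 : Measurable fun y => ∫⁻ x, g₁ x ∂(fd y) :=
        (Measure.measurable_lintegral hg₁).comp hfdm
      rw [lintegral_add_left hl1, ih₁ B hB, ih₂ B hB]
    · intro g hgm hmono ih B hB
      have hm : Measurable fun x => f x B := (Measure.measurable_coe hB).comp hf
      simp only [iSup_apply]
      simp_rw [ENNReal.iSup_mul]
      rw [lintegral_iSup (f := fun n x => g n x * f x B) (fun n => (hgm n).mul hm)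
        (fun i j hij x => mul_le_mul_left (hmono hij x) _)]
      have h2 : ∀ y, ∫⁻ x, ⨆ n, g n x ∂(fd y) = ⨆ n, ∫⁻ x, g n x ∂(fd y) := fun y =>
        lintegral_iSup hgm hmono
      simp_rw [h2]
      have hln : ∀ n, Measurable fun y => ∫⁻ x, g n x ∂(fd y) := fun n =>
        (Measure.measurable_lintegral (hgm n)).comp hfdm
      rw [lintegral_iSup hln (fun i j hij y => lintegral_mono (fun x => hmono hij x))]
      simp_rw [fun n => ih n B hB]
  -- ρ.bind f = ν.withDensity h
  have hrn : Measurable (ρ.rnDeriv μ) := ρ.measurable_rnDeriv μ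
  have hh : Measurable fun y => ∫⁻ x, ρ.rnDeriv μ x ∂(fd y) :=
    (Measure.measurable_lintegral hrn).comp hfdm
  have heq : ρ.bind f = ν.withDensity (fun y => ∫⁻ x, ρ.rnDeriv μ x ∂(fd y)) := by
    ext B hB
    rw [Measure.bind_apply hB hf.aemeasurable, withDensity_apply _ hB]
    have hρ : μ.withDensity (ρ.rnDeriv μ) = ρ := Measure.withDensity_rnDeriv_eq ρ μ hac
    calc ∫⁻ x, f x B ∂ρ = ∫⁻ x, f x B ∂(μ.withDensity (ρ.rnDeriv μ)) := by rw [hρ]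
      _ = ∫⁻ x, ρ.rnDeriv μ x * f x B ∂μ :=
        lintegral_withDensity_eq_lintegral_mul μ hrn ((Measure.measurable_coe hB).comp hf)
      _ = ∫⁻ y in B, ∫⁻ x, ρ.rnDeriv μ x ∂(fd y) ∂ν := key _ hrn B hB
  have := Measure.rnDeriv_withDensity ν hh
  rw [← heq] at this
  exact this
end

section
/- (Naturality of the measure representation) Let X, Y be nonempty standard Borel spaces, f : X ⇸ Y a Markov kernel, μ a probability measure on X, ν = μ.bind f, and let f† : Y ⇸ X be a Bayesian inverse of f with respect to μ. Then for every measurable function φ : X → [0,∞], the measures (μ.withDensity φ).bind f and ν.withDensity (y ↦ ∫_X φ d(f† y)) on Y are equal, i.e. for every measurable B ⊆ Y: ∫_X (f x)(B) · φ(x) dμ(x) = ∫_B (∫_X φ d(f† y)) dν(y). -/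
open MeasureTheory

lemma key_ind {X Y : Type*} [MeasurableSpace X] [MeasurableSpace Y]
    (f : X → Measure Y) (hf : Measurable f)
    (μ : Measure X)
    (fd : Y → Measure X) (hfd : IsBayesInv μ f fd)
    (φ : X → ENNReal) (hφ : Measurable φ) :
    ∀ B : Set Y, MeasurableSet B →
      ∫⁻ x, f x B * φ x ∂μ = ∫⁻ y in B, (∫⁻ x, φ x ∂(fd y)) ∂(μ.bind f) := by
  obtain ⟨hfdm, hfdP, hbind, hbayes⟩ := hfd
  refine @Measurable.ennreal_induction X _
    (fun φ => ∀ B : Set Y, MeasurableSet B →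
      ∫⁻ x, f x B * φ x ∂μ = ∫⁻ y in B, (∫⁻ x, φ x ∂(fd y)) ∂(μ.bind f))
    ?_ ?_ ?_ φ hφ
  · intro c s hs
    intro B hB
    have hmB : Measurable fun x => f x B := (Measure.measurable_coe hB).comp hf
    have hms : Measurable fun y => fd y s := (Measure.measurable_coe hs).comp hfdm
    have h1 : ∫⁻ x, f x B * s.indicator (fun _ => c) x ∂μ
        = c * ∫⁻ x in s, f x B ∂μ := by
      rw [← lintegral_const_mul c hmB, ← lintegral_indicator hs]
      congr 1
      ext x
      by_cases hx : x ∈ s <;> simp [hx, mul_comm]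
    simp only [h1, lintegral_indicator_const hs, hbayes s B hs hB]
    rw [← lintegral_const_mul c hms]
  · intro φ₁ φ₂ _ hφ₁ hφ₂ ih₁ ih₂
    intro B hB
    have hmB : Measurable fun x => f x B := (Measure.measurable_coe hB).comp hf
    have hm1 : Measurable fun y => ∫⁻ x, φ₁ x ∂(fd y) :=
      (Measure.measurable_lintegral hφ₁).comp hfdm
    have hm2 : Measurable fun y => ∫⁻ x, φ₂ x ∂(fd y) :=
      (Measure.measurable_lintegral hφ₂).comp hfdm
    have : ∀ x, f x B * (φ₁ + φ₂) x = f x B * φ₁ x + f x B * φ₂ x := by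
      intro x; simp [mul_add]
    simp only [this]
    rw [lintegral_add_left (f := fun x => f x B * φ₁ x) (hmB.mul hφ₁), ih₁ B hB, ih₂ B hB]
    have : ∀ y, ∫⁻ x, (φ₁ + φ₂) x ∂(fd y)
        = (∫⁻ x, φ₁ x ∂(fd y)) + ∫⁻ x, φ₂ x ∂(fd y) := by
      intro y; exact lintegral_add_left hφ₁ _
    simp only [this]
    rw [lintegral_add_left hm1]
  · intro φn hφn hmono ih
    intro B hB
    have hmB : Measurable fun x => f x B := (Measure.measurable_coe hB).comp hf
    have h1 : ∫⁻ x, f x B * (⨆ n, φn n x) ∂μ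
        = ⨆ n, ∫⁻ x, f x B * φn n x ∂μ := by
      rw [← lintegral_iSup (f := fun n x => f x B * φn n x) (fun n => hmB.mul (hφn n))
        (fun i j hij x => mul_le_mul_right (hmono hij x) _)]
      simp [ENNReal.mul_iSup]
    have h2 : ∀ y, ∫⁻ x, ⨆ n, φn n x ∂(fd y) = ⨆ n, ∫⁻ x, φn n x ∂(fd y) :=
      fun y => lintegral_iSup hφn hmono
    have h3 : ∫⁻ y in B, ⨆ n, ∫⁻ x, φn n x ∂(fd y) ∂(μ.bind f)
        = ⨆ n, ∫⁻ y in B, (∫⁻ x, φn n x ∂(fd y)) ∂(μ.bind f) :=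
      lintegral_iSup (fun n => (Measure.measurable_lintegral (hφn n)).comp hfdm)
        (fun i j hij y => lintegral_mono (fun x => hmono hij x))
    simp only [h1, h2, h3]
    exact iSup_congr fun n => ih n B hB

/-- Naturality of the measure representation:
`(μ.withDensity φ).bind f = ν.withDensity (fun y => ∫ φ d(f† y))`. -/
theorem measure_representation_natural
    {X Y : Type*}
    [MeasurableSpace X] [StandardBorelSpace X] [Nonempty X]
    [MeasurableSpace Y] [StandardBorelSpace Y] [Nonempty Y]
    (f : X → Measure Y) (hf : Measurable f) (hfP : ∀ x, IsProbabilityMeasure (f x))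
    (μ : Measure X) [IsProbabilityMeasure μ]
    (fd : Y → Measure X) (hfd : IsBayesInv μ f fd)
    (φ : X → ENNReal) (hφ : Measurable φ) :
    (μ.withDensity φ).bind f
        = (μ.bind f).withDensity (fun y => ∫⁻ x, φ x ∂(fd y)) ∧
    ∀ B : Set Y, MeasurableSet B →
      ∫⁻ x, f x B * φ x ∂μ = ∫⁻ y in B, (∫⁻ x, φ x ∂(fd y)) ∂(μ.bind f) := by
  have key := key_ind f hf μ fd hfd φ hφ
  refine ⟨?_, key⟩
  ext B hB
  have hmB : Measurable fun x => f x B := (Measure.measurable_coe hB).comp hf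
  rw [Measure.bind_apply hB hf.aemeasurable, withDensity_apply _ hB,
    lintegral_withDensity_eq_lintegral_mul _ hφ hmB,
    ← key B hB]
  congr 1
  ext x
  simp [mul_comm]
end

section
/- (Bayesian inversion commutes with approximation) Let X, Y, X', Y' be nonempty standard Borel spaces, f : X ⇸ Y a Markov kernel, μ a probability measure on X, ν = μ.bind f, and let p : X → X' and q : Y → Y' be measurable maps. Let f† be a Bayesian inverse of f with respect to μ, let p†_μ : X' ⇸ X be a Bayesian inverse of the deterministic kernel δ_p with respect to μ, and let q†_ν : Y' ⇸ Y be a Bayesian inverse of δ_q with respect to ν. Define the approximation f^{p,q} := q†_ν ∘ δ_q ∘ f ∘ p†_μ ∘ δ_p : X ⇸ Y. Then μ.bind f^{p,q} = ν, and the kernel (f†)^{q,p} := p†_μ ∘ δ_p ∘ f† ∘ q†_ν ∘ δ_q : Y ⇸ X is a Bayesian inverse of f^{p,q} with respect to μ. -/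
open MeasureTheory

section Helpers

open ProbabilityTheory Set
open scoped ENNReal

variable {X Y Z : Type*} [MeasurableSpace X] [MeasurableSpace Y] [MeasurableSpace Z]

lemma isProbabilityMeasure_bind'' {μ : Measure X} [IsProbabilityMeasure μ]
    {f : X → Measure Y} (hf : Measurable f) (hfP : ∀ x, IsProbabilityMeasure (f x)) :
    IsProbabilityMeasure (μ.bind f) := by
  constructor
  rw [Measure.bind_apply MeasurableSet.univ hf.aemeasurable]
  simp only [fun x => (hfP x).measure_univ]
  simp

lemma bayes_lintegral {μ : Measure X} [IsProbabilityMeasure μ]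
    {f : X → Measure Y} (hf : Measurable f) (hfP : ∀ x, IsProbabilityMeasure (f x))
    {g : Y → Measure X} (hg : Measurable g) (hgP : ∀ y, IsProbabilityMeasure (g y))
    (hsym : ∀ (A : Set X) (B : Set Y), MeasurableSet A → MeasurableSet B →
      ∫⁻ x in A, f x B ∂μ = ∫⁻ y in B, g y A ∂(μ.bind f))
    {h : X × Y → ℝ≥0∞} (hh : Measurable h) :
    ∫⁻ x, ∫⁻ y, h (x, y) ∂(f x) ∂μ = ∫⁻ y, ∫⁻ x, h (x, y) ∂(g y) ∂(μ.bind f) := by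
  haveI : IsProbabilityMeasure (μ.bind f) := isProbabilityMeasure_bind'' hf hfP
  let κ : Kernel X Y := ⟨f, hf⟩
  let η : Kernel Y X := ⟨g, hg⟩
  haveI : IsMarkovKernel κ := ⟨hfP⟩
  haveI : IsMarkovKernel η := ⟨hgP⟩
  have key : μ.compProd κ = ((μ.bind f).compProd η).map Prod.swap := by
    refine ext_of_generate_finite _ generateFrom_prod.symm isPiSystem_prod ?_ ?_
    · rintro s ⟨A, hA, B, hB, rfl⟩
      rw [Measure.compProd_apply_prod hA hB,
        Measure.map_apply measurable_swap (hA.prod hB)]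
      have hsw : Prod.swap ⁻¹' (A ×ˢ B) = B ×ˢ A := by
        ext z; simp [and_comm]
      rw [hsw, Measure.compProd_apply_prod hB hA]
      exact hsym A B hA hB
    · simp [Measure.map_apply measurable_swap MeasurableSet.univ]
  have l1 : ∫⁻ x, ∫⁻ y, h (x, y) ∂(κ x) ∂μ = ∫⁻ z, h z ∂(μ.compProd κ) :=
    (Measure.lintegral_compProd hh).symm
  have l2 : ∫⁻ z, h z ∂(((μ.bind f).compProd η).map Prod.swap)
      = ∫⁻ w, h w.swap ∂((μ.bind f).compProd η) := lintegral_map hh measurable_swap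
  have l3 : ∫⁻ w, h w.swap ∂((μ.bind f).compProd η)
      = ∫⁻ y, ∫⁻ x, h (x, y) ∂(η y) ∂(μ.bind f) :=
    Measure.lintegral_compProd (hh.comp measurable_swap)
  show ∫⁻ x, ∫⁻ y, h (x, y) ∂(κ x) ∂μ = ∫⁻ y, ∫⁻ x, h (x, y) ∂(η y) ∂(μ.bind f)
  rw [l1, key, l2, l3]

/-- The Bayesian inverse relation is symmetric. -/
lemma IsBayesInv.symm' {μ : Measure X} {f : X → Measure Y} {g : Y → Measure X}
    (hf : Measurable f) (hfP : ∀ x, IsProbabilityMeasure (f x))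
    (h : IsBayesInv μ f g) : IsBayesInv (μ.bind f) g f := by
  obtain ⟨hg, hgP, htot, hsym⟩ := h
  refine ⟨hf, hfP, by rw [htot], ?_⟩
  intro B A hB hA
  rw [htot]
  exact (hsym A B hA hB).symm

/-- Composition of Bayesian inverses. -/
lemma IsBayesInv.comp' {μ : Measure X} [IsProbabilityMeasure μ]
    {f₁ : X → Measure Y} {f₂ : Y → Measure Z} {g₁ : Y → Measure X} {g₂ : Z → Measure Y}
    (hf₁ : Measurable f₁) (hf₁P : ∀ x, IsProbabilityMeasure (f₁ x))
    (hf₂ : Measurable f₂) (hf₂P : ∀ y, IsProbabilityMeasure (f₂ y))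
    (h₁ : IsBayesInv μ f₁ g₁) (h₂ : IsBayesInv (μ.bind f₁) f₂ g₂) :
    IsBayesInv μ (fun x => (f₁ x).bind f₂) (fun z => (g₂ z).bind g₁) := by
  obtain ⟨hg₁, hg₁P, htot₁, hsym₁⟩ := h₁
  obtain ⟨hg₂, hg₂P, htot₂, hsym₂⟩ := h₂
  haveI : IsProbabilityMeasure (μ.bind f₁) := isProbabilityMeasure_bind'' hf₁ hf₁P
  have hG : Measurable fun z => (g₂ z).bind g₁ := (Measure.measurable_bind' hg₁).comp hg₂
  have hbindF : μ.bind (fun x => (f₁ x).bind f₂) = (μ.bind f₁).bind f₂ :=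
    (Measure.bind_bind hf₁.aemeasurable hf₂.aemeasurable).symm
  refine ⟨hG, fun z => by
      haveI := hg₂P z; exact isProbabilityMeasure_bind'' hg₁ hg₁P, ?_, ?_⟩
  · rw [hbindF, ← Measure.bind_bind hg₂.aemeasurable hg₁.aemeasurable, htot₂, htot₁]
  · intro A C hA hC
    rw [hbindF]
    have hmA : Measurable fun y => g₁ y A := (Measure.measurable_coe hA).comp hg₁
    have hmC : Measurable fun y => f₂ y C := (Measure.measurable_coe hC).comp hf₂
    -- step 1 : LHS as a double integral
    have e12 : ∫⁻ x in A, ((f₁ x).bind f₂) C ∂μ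
        = ∫⁻ x, ∫⁻ y, A.indicator 1 x * f₂ y C ∂(f₁ x) ∂μ := by
      rw [← lintegral_indicator hA]
      congr 1; funext x
      rw [lintegral_const_mul _ hmC]
      by_cases hx : x ∈ A <;> simp [hx, Measure.bind_apply hC hf₂.aemeasurable]
    -- step 2 : swap over (f₁, g₁)
    have e23 : ∫⁻ x, ∫⁻ y, A.indicator 1 x * f₂ y C ∂(f₁ x) ∂μ
        = ∫⁻ y, ∫⁻ x, A.indicator 1 x * f₂ y C ∂(g₁ y) ∂(μ.bind f₁) :=
      bayes_lintegral hf₁ hf₁P hg₁ hg₁P hsym₁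
        (((measurable_one.indicator hA).comp measurable_fst).mul
          (hmC.comp measurable_snd))
    -- step 3 : compute inner integral
    have e34 : ∫⁻ y, ∫⁻ x, A.indicator 1 x * f₂ y C ∂(g₁ y) ∂(μ.bind f₁)
        = ∫⁻ y, g₁ y A * f₂ y C ∂(μ.bind f₁) := by
      congr 1; funext y
      rw [lintegral_mul_const _ (measurable_one.indicator hA), lintegral_indicator_one hA]
    -- step 4 : rewrite as a double integral over (f₂, g₂)
    have e45 : ∫⁻ y, g₁ y A * f₂ y C ∂(μ.bind f₁)
        = ∫⁻ y, ∫⁻ z, g₁ y A * C.indicator 1 z ∂(f₂ y) ∂(μ.bind f₁) := by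
      congr 1; funext y
      rw [lintegral_const_mul _ (measurable_one.indicator hC), lintegral_indicator_one hC]
    -- step 5 : swap over (f₂, g₂)
    have e56 : ∫⁻ y, ∫⁻ z, g₁ y A * C.indicator 1 z ∂(f₂ y) ∂(μ.bind f₁)
        = ∫⁻ z, ∫⁻ y, g₁ y A * C.indicator 1 z ∂(g₂ z) ∂((μ.bind f₁).bind f₂) :=
      bayes_lintegral hf₂ hf₂P hg₂ hg₂P hsym₂
        ((hmA.comp measurable_fst).mul
          ((measurable_one.indicator hC).comp measurable_snd))
    -- step 6 : compute inner integral and conclude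
    have e67 : ∫⁻ z, ∫⁻ y, g₁ y A * C.indicator 1 z ∂(g₂ z) ∂((μ.bind f₁).bind f₂)
        = ∫⁻ z in C, ((g₂ z).bind g₁) A ∂((μ.bind f₁).bind f₂) := by
      rw [← lintegral_indicator hC]
      congr 1; funext z
      rw [lintegral_mul_const _ hmA]
      by_cases hz : z ∈ C <;> simp [hz, Measure.bind_apply hA hg₁.aemeasurable]
    rw [e12, e23, e34, e45, e56, e67]

end Helpers

/-- Bayesian inversion commutes with approximation along quotient maps `p`, `q`:
the approximation `f^{p,q}` preserves the pushforward measure, and the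
approximation `(f†)^{q,p}` of the Bayesian inverse is a Bayesian inverse of
`f^{p,q}`. -/
theorem bayesian_inverse_commutes_with_approximation
    {X Y X' Y' : Type*}
    [MeasurableSpace X] [StandardBorelSpace X] [Nonempty X]
    [MeasurableSpace Y] [StandardBorelSpace Y] [Nonempty Y]
    [MeasurableSpace X'] [StandardBorelSpace X'] [Nonempty X']
    [MeasurableSpace Y'] [StandardBorelSpace Y'] [Nonempty Y']
    (f : X → Measure Y) (hf : Measurable f) (hfP : ∀ x, IsProbabilityMeasure (f x))
    (μ : Measure X) [IsProbabilityMeasure μ]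
    (p : X → X') (hp : Measurable p) (q : Y → Y') (hq : Measurable q)
    (fd : Y → Measure X) (hfd : IsBayesInv μ f fd)
    (pd : X' → Measure X)
    (hpd : IsBayesInv μ (fun x => Measure.dirac (p x)) pd)
    (qd : Y' → Measure Y)
    (hqd : IsBayesInv (μ.bind f) (fun y => Measure.dirac (q y)) qd) :
    μ.bind (fun x =>
        ((((Measure.dirac (p x)).bind pd).bind f).bind
          (fun y => Measure.dirac (q y))).bind qd) = μ.bind f ∧
    IsBayesInv μ
      (fun x =>
        ((((Measure.dirac (p x)).bind pd).bind f).bind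
          (fun y => Measure.dirac (q y))).bind qd)
      (fun y =>
        ((((Measure.dirac (q y)).bind qd).bind fd).bind
          (fun x => Measure.dirac (p x))).bind pd) := by
  have hδp : Measurable fun x : X => Measure.dirac (p x) := Measure.measurable_dirac.comp hp
  have hδq : Measurable fun y : Y => Measure.dirac (q y) := Measure.measurable_dirac.comp hq
  have hδpP : ∀ x : X, IsProbabilityMeasure (Measure.dirac (p x)) := fun _ => inferInstance
  have hδqP : ∀ y : Y, IsProbabilityMeasure (Measure.dirac (q y)) := fun _ => inferInstance
  have hpdm := hpd.1; have hpdP := hpd.2.1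
  have hqdm := hqd.1; have hqdP := hqd.2.1
  have hfdm := hfd.1; have hfdP := hfd.2.1
  haveI : IsProbabilityMeasure (μ.bind f) := isProbabilityMeasure_bind'' hf hfP
  -- step 1 : δp ≫ pd
  have hK1 : Measurable fun x : X => (Measure.dirac (p x)).bind pd :=
    (Measure.measurable_bind' hpdm).comp hδp
  have hK1P : ∀ x : X, IsProbabilityMeasure ((Measure.dirac (p x)).bind pd) := fun x =>
    isProbabilityMeasure_bind'' hpdm hpdP
  have e1 : (μ.bind fun x => (Measure.dirac (p x)).bind pd) = μ := by
    rw [← Measure.bind_bind hδp.aemeasurable hpdm.aemeasurable]; exact hpd.2.2.1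
  have c1 : IsBayesInv μ (fun x => (Measure.dirac (p x)).bind pd)
      (fun x => (Measure.dirac (p x)).bind pd) :=
    IsBayesInv.comp' hδp hδpP hpdm hpdP hpd (IsBayesInv.symm' hδp hδpP hpd)
  -- step 2 : (δp ≫ pd) ≫ f
  have hK2 : Measurable fun x : X => ((Measure.dirac (p x)).bind pd).bind f :=
    (Measure.measurable_bind' hf).comp hK1
  have hK2P : ∀ x, IsProbabilityMeasure (((Measure.dirac (p x)).bind pd).bind f) := fun x => by
    haveI := hK1P x; exact isProbabilityMeasure_bind'' hf hfP
  have e2 : (μ.bind fun x => ((Measure.dirac (p x)).bind pd).bind f) = μ.bind f := by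
    rw [← Measure.bind_bind hK1.aemeasurable hf.aemeasurable, e1]
  have c2 : IsBayesInv μ (fun x => ((Measure.dirac (p x)).bind pd).bind f)
      (fun y => (fd y).bind fun x => (Measure.dirac (p x)).bind pd) :=
    IsBayesInv.comp' hK1 hK1P hf hfP c1 (by rw [e1]; exact hfd)
  -- step 3 : ((δp ≫ pd) ≫ f) ≫ δq
  have hK3 : Measurable fun x : X => ((((Measure.dirac (p x)).bind pd).bind f).bind
      fun y => Measure.dirac (q y)) := (Measure.measurable_bind' hδq).comp hK2
  have hK3P : ∀ x, IsProbabilityMeasure ((((Measure.dirac (p x)).bind pd).bind f).bind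
      fun y => Measure.dirac (q y)) := fun x => by
    haveI := hK2P x; exact isProbabilityMeasure_bind'' hδq hδqP
  have e3 : (μ.bind fun x => ((((Measure.dirac (p x)).bind pd).bind f).bind
      fun y => Measure.dirac (q y))) = (μ.bind f).bind fun y => Measure.dirac (q y) := by
    rw [← Measure.bind_bind hK2.aemeasurable hδq.aemeasurable, e2]
  have c3 : IsBayesInv μ
      (fun x => ((((Measure.dirac (p x)).bind pd).bind f).bind fun y => Measure.dirac (q y)))
      (fun y' => (qd y').bind fun y => (fd y).bind fun x => (Measure.dirac (p x)).bind pd) :=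
    IsBayesInv.comp' hK2 hK2P hδq hδqP c2 (by rw [e2]; exact hqd)
  -- step 4 : (((δp ≫ pd) ≫ f) ≫ δq) ≫ qd
  have c4 : IsBayesInv μ
      (fun x => (((((Measure.dirac (p x)).bind pd).bind f).bind
        fun y => Measure.dirac (q y))).bind qd)
      (fun y => (Measure.dirac (q y)).bind
        fun y' => (qd y').bind fun y₂ => (fd y₂).bind fun x => (Measure.dirac (p x)).bind pd) :=
    IsBayesInv.comp' hK3 hK3P hqdm hqdP c3 (by rw [e3]; exact IsBayesInv.symm' hδq hδqP hqd)
  -- goal 1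
  have goal1 : (μ.bind fun x => (((((Measure.dirac (p x)).bind pd).bind f).bind
      fun y => Measure.dirac (q y))).bind qd) = μ.bind f := by
    rw [← Measure.bind_bind hK3.aemeasurable hqdm.aemeasurable, e3]; exact hqd.2.2.1
  refine ⟨goal1, ?_⟩
  -- rewrite the inverse into left-associated form
  have hG3 : Measurable fun y₂ => (fd y₂).bind fun x => (Measure.dirac (p x)).bind pd :=
    (Measure.measurable_bind' hK1).comp hfdm
  have hGeq : (fun y => (Measure.dirac (q y)).bind
        fun y' => (qd y').bind fun y₂ => (fd y₂).bind fun x => (Measure.dirac (p x)).bind pd)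
      = fun y => ((((Measure.dirac (q y)).bind qd).bind fd).bind
          (fun x => Measure.dirac (p x))).bind pd := by
    funext y
    rw [← Measure.bind_bind hqdm.aemeasurable hG3.aemeasurable, ← Measure.bind_bind hfdm.aemeasurable hK1.aemeasurable,
      ← Measure.bind_bind hδp.aemeasurable hpdm.aemeasurable]
  exact hGeq ▸ c4
end

section
/- (Compositionality of approximations along hemi-bisimulations) Let X, Y, Z, X', Y', Z' be nonempty standard Borel spaces, μ a probability measure on X, f : X ⇸ Y and g : Y ⇸ Z Markov kernels, ν = μ.bind f and ρ = ν.bind g. Let p : X → X', q : Y → Y', r : Z → Z' be measurable maps, and let p†_μ, q†_ν, r†_ρ be Bayesian inverses of the deterministic kernels δ_p, δ_q, δ_r with respect to μ, ν, ρ respectively. Define f^{p,q} := q†_ν ∘ δ_q ∘ f ∘ p†_μ ∘ δ_p and g^{q,r} := r†_ρ ∘ δ_r ∘ g ∘ q†_ν ∘ δ_q and (g ∘ f)^{p,r} := r†_ρ ∘ δ_r ∘ g ∘ f ∘ p†_μ ∘ δ_p. If q is a left hemi-bisimulation for f, i.e. (q†_ν ∘ δ_q ∘ f)(x) = f(x)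 for μ-almost every x, then (g ∘ f)^{p,r}(x) = (g^{q,r} ∘ f^{p,q})(x) for μ-almost every x ∈ X. -/
open MeasureTheory

namespace BayesAux

open ProbabilityTheory

variable {α β : Type*} [MeasurableSpace α] [MeasurableSpace β]

lemma bind_congr_ae (μ : Measure α) {f g : α → Measure β} (hf : Measurable f)
    (hg : Measurable g) (h : f =ᵐ[μ] g) : μ.bind f = μ.bind g := by
  ext s hs
  rw [Measure.bind_apply hs hf.aemeasurable, Measure.bind_apply hs hg.aemeasurable]
  refine lintegral_congr_ae (h.mono fun x hx => ?_)
  show f x s = g x s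
  rw [hx]

lemma ae_bind {μ : Measure α} {κ : α → Measure β} (hκ : Measurable κ) {P : β → Prop}
    (h : ∀ᵐ y ∂(μ.bind κ), P y) : ∀ᵐ x ∂μ, ∀ᵐ y ∂(κ x), P y := by
  set N := toMeasurable (μ.bind κ) {y | ¬ P y} with hNdef
  have hN : MeasurableSet N := measurableSet_toMeasurable _ _
  have h0 : μ.bind κ N = 0 := by
    rw [hNdef, measure_toMeasurable]; exact h
  rw [Measure.bind_apply hN hκ.aemeasurable] at h0
  have h1 := (lintegral_eq_zero_iff ((Measure.measurable_coe hN).comp hκ)).mp h0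
  filter_upwards [h1] with x hx
  rw [ae_iff]
  exact measure_mono_null (subset_toMeasurable _ _) hx

/-- A Bayesian inverse of a deterministic kernel is concentrated on fibers. -/
lemma concentration {Y Y' : Type*} [MeasurableSpace Y] [MeasurableSpace Y']
    [StandardBorelSpace Y'] (ν : Measure Y) [IsProbabilityMeasure ν]
    {q : Y → Y'} (hq : Measurable q) {qd : Y' → Measure Y}
    (hqd : IsBayesInv ν (fun y => Measure.dirac (q y)) qd) :
    ∀ᵐ y' ∂(ν.bind (fun y => Measure.dirac (q y))), qd y' {y | q y ≠ y'} = 0 := by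
  obtain ⟨hqdm, hqdP, hinv, hbayes⟩ := hqd
  obtain ⟨e, he⟩ := exists_measurableEmbedding_real Y'
  let κ : ProbabilityTheory.Kernel Y' Y := ⟨qd, hqdm⟩
  haveI : ProbabilityTheory.IsMarkovKernel κ := ⟨hqdP⟩
  have hmap : Measurable fun y : Y => (q y, y) := hq.prodMk measurable_id
  have hbindmap : ν.bind (fun y => Measure.dirac (q y)) = ν.map q :=
    Measure.bind_dirac_eq_map ν hq
  set τ := ν.map q with hτ
  haveI : IsProbabilityMeasure τ := Measure.isProbabilityMeasure_map hq.aemeasurable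
  have hEset : MeasurableSet {w : Y' × Y | q w.2 = w.1} := by
    have hrw : {w : Y' × Y | q w.2 = w.1} = {w : Y' × Y | e (q w.2) = e w.1} := by
      ext w; simp [he.injective.eq_iff]
    rw [hrw]
    exact measurableSet_eq_fun (he.measurable.comp (hq.comp measurable_snd))
      (he.measurable.comp measurable_fst)
  have hE : MeasurableSet {w : Y' × Y | q w.2 ≠ w.1} := hEset.compl
  have key : τ ⊗ₘ κ = ν.map (fun y => (q y, y)) := by
    haveI : IsProbabilityMeasure (ν.map (fun y => (q y, y))) :=
      Measure.isProbabilityMeasure_map hmap.aemeasurable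
    refine ext_of_generate_finite _ generateFrom_prod.symm isPiSystem_prod ?_ ?_
    · rintro s ⟨B, hB, A, hA, rfl⟩
      simp only [Set.mem_setOf_eq] at hB hA
      rw [Measure.compProd_apply_prod hB hA, Measure.map_apply hmap (hB.prod hA)]
      have hb : ∫⁻ y in A, (Measure.dirac (q y)) B ∂ν = ∫⁻ y' in B, qd y' A ∂τ := by
        simpa only [hbindmap] using hbayes A B hA hB
      have hL : ∫⁻ y in A, (Measure.dirac (q y)) B ∂ν = ν (q ⁻¹' B ∩ A) := by
        have h1 : ∫⁻ y in A, (Measure.dirac (q y)) B ∂ν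
            = ∫⁻ y in A, (q ⁻¹' B).indicator 1 y ∂ν := by
          refine setLIntegral_congr_fun hA (fun y _ => ?_)
          rw [Measure.dirac_apply' _ hB]
          rfl
        rw [h1, lintegral_indicator_one (hq hB), Measure.restrict_apply (hq hB)]
      have hpre : (fun y => (q y, y)) ⁻¹' (B ×ˢ A) = q ⁻¹' B ∩ A := by
        ext y; simp [Set.mem_preimage]
      rw [hpre, ← hL, hb]
      rfl
    · simp [measure_univ]
  have h0 : (τ ⊗ₘ κ) {w : Y' × Y | q w.2 ≠ w.1} = 0 := by
    rw [key, Measure.map_apply hmap hE]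
    have hpre : (fun y => (q y, y)) ⁻¹' {w : Y' × Y | q w.2 ≠ w.1} = ∅ := by
      ext y; simp
    rw [hpre, measure_empty]
  rw [Measure.compProd_apply hE] at h0
  have hm : Measurable fun y' => κ y' (Prod.mk y' ⁻¹' {w : Y' × Y | q w.2 ≠ w.1}) :=
    ProbabilityTheory.Kernel.measurable_kernel_prodMk_left hE
  rw [lintegral_eq_zero_iff hm] at h0
  rw [hbindmap]
  filter_upwards [h0] with y' hy'
  simp at hy' ⊢
  exact hy'

end BayesAux

/-- Compositionality of approximations along a left hemi-bisimulation:
if `q†_ν ∘ δ_q ∘ f = f` (μ-a.e.), then `(g ∘ f)^{p,r} = g^{q,r} ∘ f^{p,q}` (μ-a.e.). -/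
theorem approximation_compositional
    {X Y Z X' Y' Z' : Type*}
    [MeasurableSpace X] [StandardBorelSpace X] [Nonempty X]
    [MeasurableSpace Y] [StandardBorelSpace Y] [Nonempty Y]
    [MeasurableSpace Z] [StandardBorelSpace Z] [Nonempty Z]
    [MeasurableSpace X'] [StandardBorelSpace X'] [Nonempty X']
    [MeasurableSpace Y'] [StandardBorelSpace Y'] [Nonempty Y']
    [MeasurableSpace Z'] [StandardBorelSpace Z'] [Nonempty Z']
    (μ : Measure X) [IsProbabilityMeasure μ]
    (f : X → Measure Y) (hf : Measurable f) (hfP : ∀ x, IsProbabilityMeasure (f x))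
    (g : Y → Measure Z) (hg : Measurable g) (hgP : ∀ y, IsProbabilityMeasure (g y))
    (p : X → X') (hp : Measurable p)
    (q : Y → Y') (hq : Measurable q)
    (r : Z → Z') (hr : Measurable r)
    (pd : X' → Measure X)
    (hpd : IsBayesInv μ (fun x => Measure.dirac (p x)) pd)
    (qd : Y' → Measure Y)
    (hqd : IsBayesInv (μ.bind f) (fun y => Measure.dirac (q y)) qd)
    (rd : Z' → Measure Z)
    (hrd : IsBayesInv ((μ.bind f).bind g) (fun z => Measure.dirac (r z)) rd)
    (hhemi : ∀ᵐ x ∂μ, ((f x).bind (fun y => Measure.dirac (q y))).bind qd = f x) :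
    ∀ᵐ x ∂μ,
      (((((Measure.dirac (p x)).bind pd).bind f).bind g).bind
          (fun z => Measure.dirac (r z))).bind rd
      = (((((Measure.dirac (p x)).bind pd).bind f).bind
            (fun y => Measure.dirac (q y))).bind qd).bind
          (fun y =>
            ((((Measure.dirac (q y)).bind qd).bind g).bind
                (fun z => Measure.dirac (r z))).bind rd) := by
  classical
  have hδp : Measurable fun x => (Measure.dirac (p x) : Measure X') :=
    Measure.measurable_dirac.comp hp
  have hδq : Measurable fun y => (Measure.dirac (q y) : Measure Y') :=
    Measure.measurable_dirac.comp hq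
  have hδr : Measurable fun z => (Measure.dirac (r z) : Measure Z') :=
    Measure.measurable_dirac.comp hr
  have hpdp : Measurable fun x => pd (p x) := hpd.1.comp hp
  -- μ is invariant under p then pd
  have hμeq : μ.bind (fun x => pd (p x)) = μ := by
    have h := hpd.2.2.1
    rw [Measure.bind_bind hδp.aemeasurable hpd.1.aemeasurable] at h
    simpa only [Measure.dirac_bind hpd.1] using h
  -- kernel measurabilities
  have hκ1 : Measurable fun x => (pd (p x)).bind f :=
    (Measure.measurable_bind' hf).comp hpdp
  have hν : μ.bind (fun x => (pd (p x)).bind f) = μ.bind f := by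
    have h : (μ.bind (fun x => pd (p x))).bind f
        = μ.bind (fun x => (pd (p x)).bind f) := Measure.bind_bind hpdp.aemeasurable hf.aemeasurable
    rw [hμeq] at h
    exact h.symm
  haveI : IsProbabilityMeasure (μ.bind f) := by
    constructor
    rw [Measure.bind_apply MeasurableSet.univ hf.aemeasurable]
    simp [measure_univ]
  -- hemi-bisimulation transferred along pd ∘ p
  have hhemi' : ∀ᵐ x ∂μ, ∀ᵐ x' ∂(pd (p x)),
      ((f x').bind (fun y => Measure.dirac (q y))).bind qd = f x' :=
    BayesAux.ae_bind hpdp (by rw [hμeq]; exact hhemi)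
  -- concentration transferred
  have hconc := BayesAux.concentration (μ.bind f) hq hqd
  have hκ2 : Measurable fun x => ((pd (p x)).bind f).bind (fun y => Measure.dirac (q y)) :=
    (Measure.measurable_bind' hδq).comp hκ1
  have hκ2eq : μ.bind (fun x => ((pd (p x)).bind f).bind (fun y => Measure.dirac (q y)))
      = (μ.bind f).bind (fun y => Measure.dirac (q y)) := by
    have h : (μ.bind (fun x => (pd (p x)).bind f)).bind (fun y => Measure.dirac (q y))
        = μ.bind (fun x => ((pd (p x)).bind f).bind (fun y => Measure.dirac (q y))) :=
      Measure.bind_bind hκ1.aemeasurable hδq.aemeasurable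
    rw [hν] at h
    exact h.symm
  have hconc' : ∀ᵐ x ∂μ, ∀ᵐ y' ∂(((pd (p x)).bind f).bind (fun y => Measure.dirac (q y))),
      qd y' {y | q y ≠ y'} = 0 :=
    BayesAux.ae_bind hκ2 (by rw [hκ2eq]; exact hconc)
  -- more measurability
  have hK : Measurable fun y => (((g y).bind (fun z => Measure.dirac (r z))).bind rd) :=
    (Measure.measurable_bind' hrd.1).comp ((Measure.measurable_bind' hδr).comp hg)
  have hH : Measurable fun y' => ((((qd y').bind g).bind (fun z => Measure.dirac (r z))).bind rd) :=
    (Measure.measurable_bind' hrd.1).comp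
      ((Measure.measurable_bind' hδr).comp ((Measure.measurable_bind' hg).comp hqd.1))
  have hG : Measurable fun y =>
      (((((Measure.dirac (q y)).bind qd).bind g).bind (fun z => Measure.dirac (r z))).bind rd) :=
    ((Measure.measurable_bind' hrd.1).comp
      ((Measure.measurable_bind' hδr).comp ((Measure.measurable_bind' hg).comp
        (Measure.measurable_bind' hqd.1)))).comp hδq
  have hqdG : Measurable fun y' => (qd y').bind (fun y =>
      (((((Measure.dirac (q y)).bind qd).bind g).bind (fun z => Measure.dirac (r z))).bind rd)) :=
    (Measure.measurable_bind' hG).comp hqd.1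
  have hqdK : Measurable fun y' => (qd y').bind (fun y =>
      (((g y).bind (fun z => Measure.dirac (r z))).bind rd)) :=
    (Measure.measurable_bind' hK).comp hqd.1
  have hfq : Measurable fun x' => (f x').bind (fun y => Measure.dirac (q y)) :=
    (Measure.measurable_bind' hδq).comp hf
  have hfqd : Measurable fun x' => ((f x').bind (fun y => Measure.dirac (q y))).bind qd :=
    (Measure.measurable_bind' hqd.1).comp hfq
  filter_upwards [hhemi', hconc'] with x h1 h2
  rw [Measure.dirac_bind hpd.1]
  set m := pd (p x) with hmdef
  -- the hemi identity for the measure m.bind f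
  have hheml : ((m.bind f).bind (fun y => Measure.dirac (q y))).bind qd = m.bind f := by
    have B1 : (m.bind f).bind (fun y => Measure.dirac (q y))
        = m.bind (fun x' => (f x').bind (fun y => Measure.dirac (q y))) :=
      Measure.bind_bind hf.aemeasurable hδq.aemeasurable
    have B2 : (m.bind (fun x' => (f x').bind (fun y => Measure.dirac (q y)))).bind qd
        = m.bind (fun x' => ((f x').bind (fun y => Measure.dirac (q y))).bind qd) :=
      Measure.bind_bind hfq.aemeasurable hqd.1.aemeasurable
    rw [B1, B2]
    exact BayesAux.bind_congr_ae m hfqd hf h1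
  -- pointwise on concentrated y': binding qd y' through G collapses
  have hstep : ∀ᵐ y' ∂((m.bind f).bind (fun y => Measure.dirac (q y))),
      (qd y').bind (fun y =>
        (((((Measure.dirac (q y)).bind qd).bind g).bind (fun z => Measure.dirac (r z))).bind rd))
      = ((((qd y').bind g).bind (fun z => Measure.dirac (r z))).bind rd) := by
    filter_upwards [h2] with y' hy'
    have hqy : ∀ᵐ y ∂(qd y'), q y = y' := by
      rw [ae_iff]; exact hy'
    have hGH : (fun y =>
        (((((Measure.dirac (q y)).bind qd).bind g).bind (fun z => Measure.dirac (r z))).bind rd))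
        =ᵐ[qd y'] (fun _ =>
        ((((qd y').bind g).bind (fun z => Measure.dirac (r z))).bind rd)) := by
      filter_upwards [hqy] with y hy
      show (((((Measure.dirac (q y)).bind qd).bind g).bind (fun z => Measure.dirac (r z))).bind rd)
        = ((((qd y').bind g).bind (fun z => Measure.dirac (r z))).bind rd)
      rw [Measure.dirac_bind hqd.1, hy]
    rw [BayesAux.bind_congr_ae (qd y') hG measurable_const hGH, Measure.bind_const]
    haveI := hqd.2.1 y'
    rw [measure_univ, one_smul]
  -- main computation
  have A1 : ((m.bind f).bind g).bind (fun z => Measure.dirac (r z))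
      = (m.bind f).bind (fun y => (g y).bind (fun z => Measure.dirac (r z))) :=
    Measure.bind_bind hg.aemeasurable hδr.aemeasurable
  have A2 : ((m.bind f).bind (fun y => (g y).bind (fun z => Measure.dirac (r z)))).bind rd
      = (m.bind f).bind (fun y => (((g y).bind (fun z => Measure.dirac (r z))).bind rd)) :=
    Measure.bind_bind ((Measure.measurable_bind' hδr).comp hg).aemeasurable hrd.1.aemeasurable
  have A3 : (((m.bind f).bind (fun y => Measure.dirac (q y))).bind qd).bind
        (fun y =>
          (((((Measure.dirac (q y)).bind qd).bind g).bind (fun z => Measure.dirac (r z))).bind rd))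
      = ((m.bind f).bind (fun y => Measure.dirac (q y))).bind
        (fun y' => (qd y').bind (fun y =>
          (((((Measure.dirac (q y)).bind qd).bind g).bind
            (fun z => Measure.dirac (r z))).bind rd))) :=
    Measure.bind_bind hqd.1.aemeasurable hG.aemeasurable
  have A4 : ((m.bind f).bind (fun y => Measure.dirac (q y))).bind
        (fun y' => (qd y').bind (fun y =>
          (((((Measure.dirac (q y)).bind qd).bind g).bind
            (fun z => Measure.dirac (r z))).bind rd)))
      = ((m.bind f).bind (fun y => Measure.dirac (q y))).bind
        (fun y' => ((((qd y').bind g).bind (fun z => Measure.dirac (r z))).bind rd)) :=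
    BayesAux.bind_congr_ae _ hqdG hH hstep
  have A5 : ((m.bind f).bind (fun y => Measure.dirac (q y))).bind
        (fun y' => ((((qd y').bind g).bind (fun z => Measure.dirac (r z))).bind rd))
      = ((m.bind f).bind (fun y => Measure.dirac (q y))).bind
        (fun y' => (qd y').bind (fun y =>
          (((g y).bind (fun z => Measure.dirac (r z))).bind rd))) := by
    refine congrArg (Measure.bind _) (funext fun y' => ?_)
    have C1 : ((qd y').bind g).bind (fun z => Measure.dirac (r z))
        = (qd y').bind (fun y => (g y).bind (fun z => Measure.dirac (r z))) :=
      Measure.bind_bind hg.aemeasurable hδr.aemeasurable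
    have C2 : ((qd y').bind (fun y => (g y).bind (fun z => Measure.dirac (r z)))).bind rd
        = (qd y').bind (fun y => (((g y).bind (fun z => Measure.dirac (r z))).bind rd)) :=
      Measure.bind_bind ((Measure.measurable_bind' hδr).comp hg).aemeasurable hrd.1.aemeasurable
    rw [C1, C2]
  have A6 : ((m.bind f).bind (fun y => Measure.dirac (q y))).bind
        (fun y' => (qd y').bind (fun y =>
          (((g y).bind (fun z => Measure.dirac (r z))).bind rd)))
      = (((m.bind f).bind (fun y => Measure.dirac (q y))).bind qd).bind
        (fun y => (((g y).bind (fun z => Measure.dirac (r z))).bind rd)) :=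
    (Measure.bind_bind hqd.1.aemeasurable hK.aemeasurable).symm
  rw [A1, A2, A3, A4, A5, A6, hheml]
end

section
/- (Approximation is non-expansive) Let X, Y, X' be nonempty standard Borel spaces, f : X ⇸ Y a Markov kernel, μ a probability measure on X, ν = μ.bind f, q : X → X' a measurable map, and q†_μ : X' ⇸ X a Bayesian inverse of the deterministic kernel δ_q with respect to μ. Define f^q := f ∘ q†_μ ∘ δ_q : X ⇸ Y. Then for every p ∈ [1, ∞] and every measurable φ : Y → ℝ with finite L^p(ν)-norm, the L^p(μ)-norm of x ↦ ∫_Y φ d(f^q x) is at most the L^p(μ)-norm of x ↦ ∫_Y φ d(f x). -/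
open MeasureTheory
open scoped ProbabilityTheory

open ProbabilityTheory in
/-- Bochner integral against a composition of kernels. -/
lemma integral_comp_kernel {α β γ : Type*} [MeasurableSpace α] [MeasurableSpace β]
    [MeasurableSpace γ]
    (η : Kernel β γ) [IsSFiniteKernel η] (κ : Kernel α β) [IsSFiniteKernel κ] (a : α)
    {g : γ → ℝ} (hg : Integrable g ((η ∘ₖ κ) a)) :
    ∫ c, g c ∂(η ∘ₖ κ) a = ∫ b, ∫ c, g c ∂η b ∂κ a := by
  rw [Kernel.comp_eq_snd_compProd, Kernel.snd_apply] at hg ⊢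
  rw [integral_map measurable_snd.aemeasurable hg.1]
  have hg2 : Integrable (fun z : β × γ => g z.2) ((κ ⊗ₖ Kernel.prodMkLeft α η) a) :=
    (integrable_map_measure hg.1 measurable_snd.aemeasurable).mp hg
  rw [ProbabilityTheory.integral_compProd hg2]
  simp

/-- Jensen's inequality for `rpow` on probability spaces. -/
lemma jensen_rpow {α : Type*} [MeasurableSpace α] (κ : Measure α)
    [IsProbabilityMeasure κ] {g : α → ENNReal} (hg : Measurable g) {r : ℝ} (hr : 1 ≤ r) :
    (∫⁻ a, g a ∂κ) ^ r ≤ ∫⁻ a, g a ^ r ∂κ := by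
  rcases eq_or_lt_of_le hr with h1 | h1
  · simp [← h1]
  · have hconj : r.HolderConjugate (r / (r - 1)) := Real.HolderConjugate.conjExponent h1
    have h := ENNReal.lintegral_mul_le_Lp_mul_Lq κ hconj hg.aemeasurable
      (aemeasurable_const (b := (1 : ENNReal)))
    simp only [mul_one, ENNReal.one_rpow, lintegral_const, measure_univ] at h
    have hr0 : 0 ≤ r := le_trans zero_le_one hr
    have h2 := ENNReal.rpow_le_rpow h hr0
    rw [← ENNReal.rpow_mul, one_div, inv_mul_cancel₀ (by positivity), ENNReal.rpow_one] at h2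
    simpa [Pi.mul_apply] using h2

/-- Approximation is non-expansive: the predicate transformer of the
approximated kernel `f^q = f ∘ q†_μ ∘ δ_q` has `L^p` norms bounded by those of
the original kernel. -/
theorem approximation_nonexpansive
    {X Y X' : Type*}
    [MeasurableSpace X] [StandardBorelSpace X] [Nonempty X]
    [MeasurableSpace Y] [StandardBorelSpace Y] [Nonempty Y]
    [MeasurableSpace X'] [StandardBorelSpace X'] [Nonempty X']
    (f : X → Measure Y) (hf : Measurable f) (hfP : ∀ x, IsProbabilityMeasure (f x))
    (μ : Measure X) [IsProbabilityMeasure μ]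
    (q : X → X') (hq : Measurable q)
    (qd : X' → Measure X)
    (hqd : IsBayesInv μ (fun x => Measure.dirac (q x)) qd) :
    ∀ p : ENNReal, 1 ≤ p → ∀ φ : Y → ℝ, Measurable φ →
      eLpNorm φ p (μ.bind f) < ⊤ →
      eLpNorm (fun x => ∫ y, φ y ∂(((Measure.dirac (q x)).bind qd).bind f)) p μ
        ≤ eLpNorm (fun x => ∫ y, φ y ∂(f x)) p μ := by
  obtain ⟨hqdm, hqdP, hinv, _hbayes⟩ := hqd
  intro p hp φ hφ hφp
  set ψ : X → ℝ := fun x => ∫ y, φ y ∂(f x) with hψdef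
  let fK : ProbabilityTheory.Kernel X Y := ⟨f, hf⟩
  haveI : ProbabilityTheory.IsMarkovKernel fK := ⟨hfP⟩
  let qK : ProbabilityTheory.Kernel X X := ⟨fun x => qd (q x), hqdm.comp hq⟩
  haveI : ProbabilityTheory.IsMarkovKernel qK := ⟨fun x => hqdP (q x)⟩
  -- basic measure identities
  have hmap : (μ.map q).bind qd = μ := by
    rw [← Measure.bind_dirac_eq_map μ hq]; exact hinv
  have hbindqd : μ.bind (fun x => qd (q x)) = μ := by
    ext s hs
    rw [Measure.bind_apply (f := fun x => qd (q x)) hs (hqdm.comp hq).aemeasurable]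
    conv_rhs => rw [← hmap]
    rw [Measure.bind_apply hs hqdm.aemeasurable,
      lintegral_map (show Measurable fun x' => qd x' s from (Measure.measurable_coe hs).comp hqdm) hq]
  have hbmeas : Measurable (fun x => (qd (q x)).bind f) :=
    (Measure.measurable_bind' hf).comp (hqdm.comp hq)
  have hν : μ.bind (fun x => (qd (q x)).bind f) = μ.bind f := by
    rw [← Measure.bind_bind (f := fun x => qd (q x)) (hqdm.comp hq).aemeasurable hf.aemeasurable, hbindqd]
  haveI : IsProbabilityMeasure (μ.bind f) := by
    constructor
    rw [Measure.bind_apply MeasurableSet.univ hf.aemeasurable]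
    simp [measure_univ]
  -- integrability
  have hφInt : Integrable φ (μ.bind f) :=
    MemLp.integrable hp ⟨hφ.aestronglyMeasurable, hφp⟩
  have hIntAE : ∀ᵐ x ∂μ, Integrable φ ((qd (q x)).bind f) := by
    have h1 : ∫⁻ x, (∫⁻ y, ‖φ y‖₊ ∂((qd (q x)).bind f)) ∂μ < ⊤ := by
      rw [← Measure.lintegral_bind (f := fun y => (‖φ y‖₊ : ENNReal)) hbmeas.aemeasurable hφ.enorm.aemeasurable, hν]
      exact hφInt.2
    have hm : Measurable fun x => ∫⁻ y, ‖φ y‖₊ ∂((qd (q x)).bind f) :=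
      (Measure.measurable_lintegral hφ.enorm).comp hbmeas
    filter_upwards [ae_lt_top hm h1.ne] with x hx
    exact ⟨hφ.aestronglyMeasurable, hx⟩
  -- measurability of ψ
  have hψm : Measurable ψ := by
    have : StronglyMeasurable fun x => ∫ y, (fun p : X × Y => φ p.2) (x, y) ∂fK x :=
      (hφ.stronglyMeasurable.comp_measurable measurable_snd).integral_kernel_prod_right'
    exact this.measurable
  -- a.e. decomposition of the approximated predicate transformer
  have hdecomp : ∀ᵐ x ∂μ,
      (∫ y, φ y ∂(((Measure.dirac (q x)).bind qd).bind f)) = ∫ x', ψ x' ∂(qd (q x)) := by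
    filter_upwards [hIntAE] with x hx
    have hck : (qd (q x)).bind f = (fK ∘ₖ qK) x := by
      rw [ProbabilityTheory.Kernel.comp_apply]; rfl
    rw [Measure.dirac_bind hqdm (q x)]
    rw [hck] at hx ⊢
    rw [integral_comp_kernel fK qK x hx]
    rfl
  rw [eLpNorm_congr_ae hdecomp]
  -- now bound the eLpNorm of Φ' x = ∫ ψ d(qd (q x))
  rcases eq_or_ne p ⊤ with hptop | hptop
  · subst hptop
    rw [eLpNorm_exponent_top, eLpNorm_exponent_top, eLpNormEssSup, eLpNormEssSup]
    set C := essSup (fun x => (‖ψ x‖₊ : ENNReal)) μ with hC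
    have hae : ∀ᵐ x ∂μ, (‖ψ x‖₊ : ENNReal) ≤ C := ENNReal.ae_le_essSup _
    set N : Set X := {x | C < (‖ψ x‖₊ : ENNReal)} with hNdef
    have hNmeas : MeasurableSet N := measurableSet_lt measurable_const hψm.enorm
    have hNnull : μ N = 0 := by
      rw [ae_iff] at hae
      simpa [hNdef, not_le] using hae
    have h0 : ∫⁻ x, qd (q x) N ∂μ = 0 := by
      rw [← Measure.bind_apply (f := fun x => qd (q x)) hNmeas (hqdm.comp hq).aemeasurable, hbindqd]
      exact hNnull
    have hqdN : ∀ᵐ x ∂μ, qd (q x) N = 0 := by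
      have hm : Measurable fun x => qd (q x) N :=
        (Measure.measurable_coe hNmeas).comp (hqdm.comp hq)
      exact (lintegral_eq_zero_iff hm).1 h0
    refine essSup_le_of_ae_le _ ?_
    filter_upwards [hqdN] with x hx
    haveI : IsProbabilityMeasure (qd (q x)) := hqdP (q x)
    calc (‖∫ x', ψ x' ∂(qd (q x))‖₊ : ENNReal)
        ≤ ∫⁻ x', ‖ψ x'‖₊ ∂(qd (q x)) := enorm_integral_le_lintegral_enorm _
      _ ≤ ∫⁻ _, C ∂(qd (q x)) := by
          refine lintegral_mono_ae ?_
          have : ∀ᵐ x' ∂(qd (q x)), x' ∉ N := by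
            rw [ae_iff]
            simpa using hx
          filter_upwards [this] with x' hx'
          simpa [hNdef, not_lt] using hx'
      _ = C := by simp [measure_univ]
  · have hp0 : p ≠ 0 := by positivity
    set r := p.toReal with hr
    have hr1 : 1 ≤ r := by
      rw [hr, ← ENNReal.toReal_one]
      exact ENNReal.toReal_mono hptop hp
    have hr0 : 0 ≤ r := le_trans zero_le_one hr1
    rw [eLpNorm_eq_lintegral_rpow_enorm_toReal hp0 hptop, eLpNorm_eq_lintegral_rpow_enorm_toReal hp0 hptop]
    refine ENNReal.rpow_le_rpow ?_ (by positivity)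
    calc ∫⁻ x, (‖∫ x', ψ x' ∂(qd (q x))‖₊ : ENNReal) ^ r ∂μ
        ≤ ∫⁻ x, ∫⁻ x', (‖ψ x'‖₊ : ENNReal) ^ r ∂(qd (q x)) ∂μ := by
          refine lintegral_mono fun x => ?_
          haveI : IsProbabilityMeasure (qd (q x)) := hqdP (q x)
          calc (‖∫ x', ψ x' ∂(qd (q x))‖₊ : ENNReal) ^ r
              ≤ (∫⁻ x', ‖ψ x'‖₊ ∂(qd (q x))) ^ r :=
                ENNReal.rpow_le_rpow (enorm_integral_le_lintegral_enorm _) hr0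
            _ ≤ ∫⁻ x', (‖ψ x'‖₊ : ENNReal) ^ r ∂(qd (q x)) :=
                jensen_rpow _ hψm.enorm hr1
      _ = ∫⁻ x, (‖ψ x‖₊ : ENNReal) ^ r ∂(μ.bind fun x => qd (q x)) :=
          (Measure.lintegral_bind (hqdm.comp hq).aemeasurable (hψm.enorm.pow_const r).aemeasurable).symm
      _ = ∫⁻ x, (‖ψ x‖₊ : ENNReal) ^ r ∂μ := by rw [hbindqd]
end

section
/- (Lévy lemma for kernel approximations) Let X be a nonempty standard Borel space with Borel σ-algebra ℬ_X, μ a probability measure on X, Y a measurable space, and f : X ⇸ Y a Markov kernel. Let (X_n) be finite measurable spaces (with the discrete σ-algebra) and p_n : X → X_n measurable maps such that the σ-algebras σ(p_n) = p_n⁻¹(𝒫(X_n)) are increasing in n and ℬ_X = σ(⋃_n σ(p_n)). For each n let p_n† : X_n ⇸ X be a Bayesian inverse of the deterministic kernel δ_{p_n} with respect to μ, and set fⁿ := f ∘ p_n† ∘ δ_{p_n} : X ⇸ Y. Then for every measurable set A ⊆ Y: (i) fⁿ(x)(A) → f(x)(A) as n → ∞ for μ-almost every x ∈ X, and (ii)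 ∫_X |fⁿ(x)(A) − f(x)(A)| dμ(x) → 0 as n → ∞. -/
open MeasureTheory Filter Topology
open scoped ENNReal

/-- Lévy lemma for kernel approximations: for a filtration generated by a
discretization scheme that generates the Borel σ-algebra, the approximations
`fⁿ = f ∘ pₙ† ∘ δ_{pₙ}` converge to `f` pointwise a.e. and in `L¹` on each
measurable set. -/
theorem levy_kernel_approximation
    {X : Type*} [MeasurableSpace X] [StandardBorelSpace X] [Nonempty X]
    {Y : Type*} [MeasurableSpace Y]
    (μ : Measure X) [IsProbabilityMeasure μ]
    (f : X → Measure Y) (hf : Measurable f) (hfP : ∀ x, IsProbabilityMeasure (f x))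
    (X' : ℕ → Type*) [∀ n, Fintype (X' n)] [∀ n, MeasurableSpace (X' n)]
    [∀ n, DiscreteMeasurableSpace (X' n)]
    (p : ∀ n, X → X' n) (hp : ∀ n, Measurable (p n))
    (hmono : Monotone fun n => MeasurableSpace.comap (p n) inferInstance)
    (hgen : (⨆ n, MeasurableSpace.comap (p n) inferInstance)
        = (inferInstance : MeasurableSpace X))
    (pd : ∀ n, X' n → Measure X)
    (hpd : ∀ n, IsBayesInv μ (fun x => Measure.dirac (p n x)) (pd n)) :
    ∀ A : Set Y, MeasurableSet A →
      (∀ᵐ x ∂μ, Tendsto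
          (fun n => (((Measure.dirac (p n x)).bind (pd n)).bind f) A)
          atTop (𝓝 (f x A))) ∧
      Tendsto
        (fun n => ∫ x,
            |((((Measure.dirac (p n x)).bind (pd n)).bind f) A).toReal
              - (f x A).toReal| ∂μ)
        atTop (𝓝 0) := by
  intro A hA
  have hfA : Measurable fun x => f x A := (Measure.measurable_coe hA).comp hf
  -- the approximations
  set Hn : ∀ n, X' n → ℝ≥0∞ := fun n y => ((pd n y).bind f) A with hHn_def
  have hFn : ∀ n x, (((Measure.dirac (p n x)).bind (pd n)).bind f) A = Hn n (p n x) := by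
    intro n x
    rw [Measure.dirac_bind (hpd n).1]
  have hHn_prob : ∀ n y, IsProbabilityMeasure ((pd n y).bind f) := by
    intro n y
    have := (hpd n).2.1 y
    constructor
    rw [Measure.bind_apply MeasurableSet.univ hf.aemeasurable]
    simp [measure_univ]
  have hHn_le : ∀ n y, Hn n y ≤ 1 := fun n y => (hHn_prob n y).1 ▸ measure_mono (Set.subset_univ A)
  have hHn_ne : ∀ n y, Hn n y ≠ ⊤ := fun n y => (lt_of_le_of_lt (hHn_le n y) ENNReal.one_lt_top).ne
  have hfA_le : ∀ x, f x A ≤ 1 := fun x => (hfP x).1 ▸ measure_mono (Set.subset_univ A)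
  have hfA_ne : ∀ x, f x A ≠ ⊤ := fun x => (lt_of_le_of_lt (hfA_le x) ENNReal.one_lt_top).ne
  -- the filtration
  set m0 : MeasurableSpace X := inferInstance with hm0
  let ℱ : Filtration ℕ m0 :=
    { seq := fun n => MeasurableSpace.comap (p n) inferInstance
      mono' := hmono
      le' := fun n => hgen ▸ le_iSup (fun n => MeasurableSpace.comap (p n) inferInstance) n }
  -- real-valued versions
  set gA : X → ℝ := fun x => (f x A).toReal with hgA_def
  have hgA_meas : Measurable gA := hfA.ennreal_toReal
  have hgA_int : Integrable gA μ := by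
    refine ⟨hgA_meas.aestronglyMeasurable, ?_⟩
    refine HasFiniteIntegral.of_bounded (C := 1) (ae_of_all _ fun x => ?_)
    rw [Real.norm_eq_abs, abs_of_nonneg ENNReal.toReal_nonneg]
    exact ENNReal.toReal_le_of_le_ofReal zero_le_one (by simpa using hfA_le x)
  -- key: the lintegral identity over cylinder sets
  have key : ∀ (n : ℕ) (B : Set (X' n)),
      ∫⁻ x in (p n) ⁻¹' B, Hn n (p n x) ∂μ = ∫⁻ x in (p n) ⁻¹' B, f x A ∂μ := by
    intro n B
    have hB : MeasurableSet B := .of_discrete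
    have hHnm : Measurable (Hn n) := .of_discrete
    have hrestr : ((μ.map (p n)).restrict B).bind (pd n) = μ.restrict ((p n) ⁻¹' B) := by
      ext S hS
      rw [Measure.bind_apply hS (hpd n).1.aemeasurable, Measure.restrict_apply hS]
      have hbayes := (hpd n).2.2.2 S B hS hB
      rw [Measure.bind_dirac_eq_map μ (hp n)] at hbayes
      rw [← hbayes]
      have heq : ∀ x, Measure.dirac (p n x) B = ((p n) ⁻¹' B).indicator 1 x := by
        intro x
        rw [Measure.dirac_apply' _ hB]
        by_cases hx : p n x ∈ B <;> simp [hx, Set.indicator_apply]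
      simp_rw [heq]
      rw [lintegral_indicator ((hp n) hB)]
      simp [Measure.restrict_restrict ((hp n) hB), Set.inter_comm]
    calc ∫⁻ x in (p n) ⁻¹' B, Hn n (p n x) ∂μ
        = ∫⁻ y in B, Hn n y ∂(μ.map (p n)) := (setLIntegral_map hB hHnm (hp n)).symm
      _ = ∫⁻ y, Hn n y ∂((μ.map (p n)).restrict B) := rfl
      _ = ∫⁻ y, ∫⁻ z, f z A ∂(pd n y) ∂((μ.map (p n)).restrict B) := by
          simp_rw [hHn_def]
          congr 1
          ext y
          rw [Measure.bind_apply hA hf.aemeasurable]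
      _ = ∫⁻ z, f z A ∂(((μ.map (p n)).restrict B).bind (pd n)) :=
          (Measure.lintegral_bind (hpd n).1.aemeasurable hfA.aemeasurable).symm
      _ = ∫⁻ x in (p n) ⁻¹' B, f x A ∂μ := by rw [hrestr]
  -- the approximations are conditional expectations
  have hcond : ∀ n, (fun x => (Hn n (p n x)).toReal) =ᵐ[μ] μ[gA | ℱ n] := by
    intro n
    have hle : (ℱ n : MeasurableSpace X) ≤ m0 := ℱ.le n
    have hmeasn : Measurable fun x => (Hn n (p n x)).toReal :=
      (Measurable.of_discrete (f := fun y => (Hn n y).toReal)).comp (hp n)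
    refine ae_eq_condExp_of_forall_setIntegral_eq hle hgA_int ?_ ?_ ?_
    · intro s _ _
      refine ⟨hmeasn.aestronglyMeasurable.restrict, ?_⟩
      refine HasFiniteIntegral.of_bounded (C := 1) (ae_of_all _ fun x => ?_)
      rw [Real.norm_eq_abs, abs_of_nonneg ENNReal.toReal_nonneg]
      exact ENNReal.toReal_le_of_le_ofReal zero_le_one (by simpa using hHn_le n (p n x))
    · intro s hs _
      obtain ⟨B, -, rfl⟩ := hs
      have hkey := key n B
      have h1 : ∫ x in (p n) ⁻¹' B, (Hn n (p n x)).toReal ∂μ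
          = (∫⁻ x in (p n) ⁻¹' B, Hn n (p n x) ∂μ).toReal := by
        rw [integral_toReal]
        · exact ((Measurable.of_discrete (f := Hn n)).comp (hp n)).aemeasurable
        · exact ae_of_all _ fun x => lt_of_le_of_lt (hHn_le n (p n x)) ENNReal.one_lt_top
      have h2 : ∫ x in (p n) ⁻¹' B, gA x ∂μ
          = (∫⁻ x in (p n) ⁻¹' B, f x A ∂μ).toReal := by
        rw [hgA_def, integral_toReal hfA.aemeasurable]
        exact ae_of_all _ fun x => lt_of_le_of_lt (hfA_le x) ENNReal.one_lt_top
      rw [h1, h2, hkey]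
    · exact StronglyMeasurable.aestronglyMeasurable
        ((Measurable.of_discrete (f := fun y => (Hn n y).toReal)).comp
          (measurable_iff_comap_le.2 le_rfl)).stronglyMeasurable
  -- Lévy's upward theorem
  have hsup : (⨆ n, (ℱ n : MeasurableSpace X)) = m0 := hgen
  have hgmeas : StronglyMeasurable[⨆ n, ℱ n] gA := by
    rw [hsup]; exact hgA_meas.stronglyMeasurable
  have hlevy := hgA_int.tendsto_ae_condExp hgmeas
  -- combine
  have hae : ∀ᵐ x ∂μ, Tendsto (fun n => (Hn n (p n x)).toReal) atTop (𝓝 (gA x)) := by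
    have hall : ∀ᵐ x ∂μ, ∀ n, (Hn n (p n x)).toReal = (μ[gA | ℱ n]) x :=
      (ae_all_iff).2 fun n => hcond n
    filter_upwards [hall, hlevy] with x h1 h2
    simpa only [funext fun n => h1 n] using h2
  constructor
  · filter_upwards [hae] with x hx
    simp_rw [hFn]
    rw [← ENNReal.tendsto_toReal_iff (fun n => hHn_ne n (p n x)) (hfA_ne x)]
    exact hx
  · have h0 : (0 : ℝ) = ∫ _x, (0 : ℝ) ∂μ := by simp
    rw [h0]
    refine tendsto_integral_of_dominated_convergence (fun _ => (2 : ℝ)) ?_ ?_ ?_ ?_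
    · intro n
      have : Measurable fun x =>
          |((((Measure.dirac (p n x)).bind (pd n)).bind f) A).toReal - (f x A).toReal| := by
        simp_rw [hFn]
        exact (((Measurable.of_discrete (f := fun y => (Hn n y).toReal)).comp (hp n)).sub
          hgA_meas).abs
      exact this.aestronglyMeasurable
    · exact integrable_const 2
    · intro n
      refine ae_of_all _ fun x => ?_
      rw [Real.norm_eq_abs, abs_abs]
      have ha : ((((Measure.dirac (p n x)).bind (pd n)).bind f) A).toReal ≤ 1 := by
        rw [hFn]
        exact ENNReal.toReal_le_of_le_ofReal zero_le_one (by simpa using hHn_le n (p n x))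
      have hb : (f x A).toReal ≤ 1 :=
        ENNReal.toReal_le_of_le_ofReal zero_le_one (by simpa using hfA_le x)
      have ha' : 0 ≤ ((((Measure.dirac (p n x)).bind (pd n)).bind f) A).toReal :=
        ENNReal.toReal_nonneg
      have hb' : 0 ≤ (f x A).toReal := ENNReal.toReal_nonneg
      rw [abs_sub_le_iff]
      constructor <;> linarith
    · filter_upwards [hae] with x hx
      simp_rw [hFn]
      have : Tendsto (fun n => (Hn n (p n x)).toReal - gA x) atTop (𝓝 0) := by
        simpa using hx.sub_const (gA x)
      simpa using this.abs
end

section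
/- (The monoidal structure is SOT-continuous) Let X₁, Y₁, X₂, Y₂ be nonempty standard Borel spaces, μᵢ probability measures on Xᵢ, and let fⁿ, f : X₁ ⇸ Y₁ and gⁿ, g : X₂ ⇸ Y₂ be Markov kernels with μ₁.bind fⁿ = μ₁.bind f = ν₁ and μ₂.bind gⁿ = μ₂.bind g = ν₂ for all n. If fⁿ converges to f in the strong operator topology (relative to μ₁, ν₁) and gⁿ converges to g in the strong operator topology (relative to μ₂, ν₂), then the product kernels fⁿ ⊗ gⁿ : X₁ × X₂ ⇸ Y₁ × Y₂, (x₁,x₂) ↦ (fⁿ x₁) ⊗ (gⁿ x₂), converge to f ⊗ g in the strong operator topology relative to μ₁ ⊗ μ₂ and ν₁ ⊗ ν₂. -/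
open MeasureTheory Filter Topology ProbabilityTheory
open scoped ENNReal NNReal

namespace ProdSOTAux

variable {X Y : Type*} [MeasurableSpace X] [MeasurableSpace Y]

lemma lint_bind (μ : Measure X) (k : Kernel X Y) {ν : Measure Y} (hk : μ.bind ⇑k = ν)
    {h : Y → ℝ≥0∞} (hh : Measurable h) :
    ∫⁻ x, ∫⁻ y, h y ∂(k x) ∂μ = ∫⁻ y, h y ∂ν := by
  rw [← hk]; exact (Measure.lintegral_bind k.measurable.aemeasurable hh.aemeasurable).symm

lemma ae_null (μ : Measure X) (k : Kernel X Y) {ν : Measure Y} (hk : μ.bind ⇑k = ν)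
    {N : Set Y} (hN : MeasurableSet N) (h0 : ν N = 0) :
    ∀ᵐ x ∂μ, k x N = 0 := by
  have h1 : ∫⁻ x, k x N ∂μ = 0 := by
    rw [← Measure.bind_apply hN k.measurable.aemeasurable, hk, h0]
  filter_upwards [(lintegral_eq_zero_iff (k.measurable_coe hN)).1 h1] with x hx using hx

lemma ae_integrable (μ : Measure X) (k : Kernel X Y) [IsSFiniteKernel k] {ν : Measure Y}
    (hk : μ.bind ⇑k = ν) {φ : Y → ℝ} (hφm : Measurable φ) (hφ : Integrable φ ν) :
    ∀ᵐ x ∂μ, Integrable φ (k x) := by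
  have hm : Measurable fun x => ∫⁻ y, ‖φ y‖₊ ∂(k x) := Measurable.lintegral_kernel hφm.nnnorm.coe_nnreal_ennreal
  have hfin : ∫⁻ x, ∫⁻ y, ‖φ y‖₊ ∂(k x) ∂μ ≠ ⊤ := by
    rw [lint_bind μ k hk hφm.nnnorm.coe_nnreal_ennreal]; exact hφ.2.ne
  filter_upwards [ae_lt_top hm hfin] with x hx
  exact ⟨hφm.aestronglyMeasurable, hx⟩

lemma meas_int (k : Kernel X Y) [IsSFiniteKernel k] {φ : Y → ℝ} (hφ : Measurable φ) :
    Measurable fun x => ∫ y, φ y ∂(k x) :=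
  (MeasureTheory.StronglyMeasurable.integral_kernel_prod_right (κ := k)
    (f := fun (_ : X) y => φ y) ((hφ.comp measurable_snd).stronglyMeasurable)).measurable

lemma pert (μ : Measure X) (k : Kernel X Y) [IsSFiniteKernel k] {ν : Measure Y}
    (hk : μ.bind ⇑k = ν) {φ ψ : Y → ℝ} (hφm : Measurable φ) (hφ : Integrable φ ν)
    (hψm : Measurable ψ) (hψ : Integrable ψ ν) :
    ∫⁻ x, ENNReal.ofReal |(∫ y, φ y ∂(k x)) - (∫ y, ψ y ∂(k x))| ∂μ
      ≤ ∫⁻ y, ‖φ y - ψ y‖₊ ∂ν := by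
  rw [← lint_bind μ k hk (h := fun y => (‖φ y - ψ y‖₊ : ℝ≥0∞)) (hφm.sub hψm).nnnorm.coe_nnreal_ennreal]
  refine lintegral_mono_ae ?_
  filter_upwards [ae_integrable μ k hk hφm hφ, ae_integrable μ k hk hψm hψ] with x h1 h2
  rw [← integral_sub h1 h2, ← Real.norm_eq_abs, ofReal_norm]
  exact enorm_integral_le_lintegral_enorm _

lemma ae_int_congr (μ : Measure X) (k : Kernel X Y) {ν : Measure Y} (hk : μ.bind ⇑k = ν)
    {φ ψ : Y → ℝ} (hφm : Measurable φ) (hψm : Measurable ψ) (h : φ =ᵐ[ν] ψ) :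
    ∀ᵐ x ∂μ, ∫ y, φ y ∂(k x) = ∫ y, ψ y ∂(k x) := by
  have hN : MeasurableSet {y | φ y = ψ y} := measurableSet_eq_fun hφm hψm
  have h0 : ν {y | φ y = ψ y}ᶜ = 0 := by
    have := ae_iff.mp h; exact this
  filter_upwards [ae_null μ k hk hN.compl h0] with x hx
  refine integral_congr_ae (ae_iff.mpr ?_)
  exact hx


variable {X Y : Type*} [MeasurableSpace X] [MeasurableSpace Y]

/-- distance functional on sets -/
noncomputable def Dset (μ : Measure X) (κs : ℕ → Kernel X Y) (κ : Kernel X Y)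
    (n : ℕ) (t : Set Y) : ℝ≥0∞ :=
  ∫⁻ x, ENNReal.ofReal |((κs n) x t).toReal - (κ x t).toReal| ∂μ

lemma Dset_meas (μ : Measure X) (κs : ℕ → Kernel X Y) (κ : Kernel X Y) (n : ℕ)
    {t : Set Y} (ht : MeasurableSet t) :
    Measurable fun x => ENNReal.ofReal |(((κs n) x) t).toReal - ((κ x) t).toReal| :=
  (((κs n).measurable_coe ht).ennreal_toReal.sub
    ((κ.measurable_coe ht).ennreal_toReal)).abs.ennreal_ofReal

lemma tendsto_Dset_compl (μ : Measure X) (κs : ℕ → Kernel X Y) (κ : Kernel X Y)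
    [∀ n, IsMarkovKernel (κs n)] [IsMarkovKernel κ]
    {t : Set Y} (ht : MeasurableSet t)
    (h : Tendsto (fun n => Dset μ κs κ n t) atTop (𝓝 0)) :
    Tendsto (fun n => Dset μ κs κ n tᶜ) atTop (𝓝 0) := by
  have key : ∀ (ρ : Measure Y), IsProbabilityMeasure ρ → (ρ tᶜ).toReal = 1 - (ρ t).toReal := by
    intro ρ hρ
    rw [prob_compl_eq_one_sub ht, ENNReal.toReal_sub_of_le prob_le_one ENNReal.one_ne_top]
    simp
  have : ∀ n, Dset μ κs κ n tᶜ = Dset μ κs κ n t := by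
    intro n
    refine lintegral_congr fun x => ?_
    rw [key _ inferInstance, key _ inferInstance]
    congr 1
    rw [show (1 - (((κs n) x) t).toReal) - (1 - ((κ x) t).toReal)
        = ((κ x) t).toReal - (((κs n) x) t).toReal by ring, abs_sub_comm]
  simpa [this] using h

lemma tendsto_Dset_iUnion (μ : Measure X) [IsProbabilityMeasure μ]
    (κs : ℕ → Kernel X Y) (κ : Kernel X Y)
    [∀ n, IsMarkovKernel (κs n)] [IsMarkovKernel κ]
    {ν : Measure Y} [IsProbabilityMeasure ν]
    (hbs : ∀ n, μ.bind ⇑(κs n) = ν) (hb : μ.bind ⇑κ = ν)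
    (s : ℕ → Set Y) (hdisj : Pairwise (Function.onFun Disjoint s)) (hmeas : ∀ i, MeasurableSet (s i))
    (hind : ∀ i, Tendsto (fun n => Dset μ κs κ n (s i)) atTop (𝓝 0)) :
    Tendsto (fun n => Dset μ κs κ n (⋃ i, s i)) atTop (𝓝 0) := by
  -- tail sets
  set t : ℕ → Set Y := fun N => ⋃ i, s (i + N) with ht
  have hdisjN : ∀ N, Pairwise (Function.onFun Disjoint fun i => s (i + N)) := by
    intro N i j hij
    exact hdisj (by omega)
  have htmeas : ∀ N, MeasurableSet (t N) := fun N => MeasurableSet.iUnion fun i => hmeas _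
  -- pointwise toReal decomposition for a markov kernel measure
  have keyρ : ∀ (ρ : Measure Y), IsProbabilityMeasure ρ → ∀ N,
      (ρ (⋃ i, s i)).toReal = (∑ i ∈ Finset.range N, (ρ (s i)).toReal) + (ρ (t N)).toReal := by
    intro ρ hρ N
    have hsum : Summable fun i => (ρ (s i)).toReal := by
      refine ENNReal.summable_toReal ?_
      rw [← measure_iUnion hdisj hmeas]; exact measure_ne_top _ _
    have h1 : (ρ (⋃ i, s i)).toReal = ∑' i, (ρ (s i)).toReal := by
      rw [measure_iUnion hdisj hmeas, ENNReal.tsum_toReal_eq (fun i => measure_ne_top _ _)]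
    have h2 : (ρ (t N)).toReal = ∑' i, (ρ (s (i + N))).toReal := by
      rw [ht, measure_iUnion (hdisjN N) (fun i => hmeas _),
        ENNReal.tsum_toReal_eq (fun i => measure_ne_top _ _)]
    rw [h1, h2, ← Summable.sum_add_tsum_nat_add N hsum]
  -- the main bound
  have hbound : ∀ N n, Dset μ κs κ n (⋃ i, s i)
      ≤ (∑ i ∈ Finset.range N, Dset μ κs κ n (s i)) + (ν (t N) + ν (t N)) := by
    intro N n
    have hpt : ∀ x, ENNReal.ofReal |(((κs n) x) (⋃ i, s i)).toReal - ((κ x) (⋃ i, s i)).toReal|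
        ≤ (∑ i ∈ Finset.range N,
            ENNReal.ofReal |(((κs n) x) (s i)).toReal - ((κ x) (s i)).toReal|)
          + (((κs n) x) (t N) + (κ x) (t N)) := by
      intro x
      have e1 := keyρ ((κs n) x) inferInstance N
      have e2 := keyρ (κ x) inferInstance N
      have habs : |(((κs n) x) (⋃ i, s i)).toReal - ((κ x) (⋃ i, s i)).toReal|
          ≤ (∑ i ∈ Finset.range N, |(((κs n) x) (s i)).toReal - ((κ x) (s i)).toReal|)
            + ((((κs n) x) (t N)).toReal + ((κ x) (t N)).toReal) := by
        rw [e1, e2]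
        have h3 : ((∑ i ∈ Finset.range N, (((κs n) x) (s i)).toReal) + (((κs n) x) (t N)).toReal)
            - ((∑ i ∈ Finset.range N, ((κ x) (s i)).toReal) + ((κ x) (t N)).toReal)
            = (∑ i ∈ Finset.range N, ((((κs n) x) (s i)).toReal - ((κ x) (s i)).toReal))
              + ((((κs n) x) (t N)).toReal - ((κ x) (t N)).toReal) := by
          rw [Finset.sum_sub_distrib]; ring
        rw [h3]
        refine (abs_add_le _ _).trans (add_le_add (Finset.abs_sum_le_sum_abs _ _) ?_)
        refine (abs_sub _ _).trans ?_
        rw [abs_of_nonneg ENNReal.toReal_nonneg, abs_of_nonneg ENNReal.toReal_nonneg]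
      calc ENNReal.ofReal |(((κs n) x) (⋃ i, s i)).toReal - ((κ x) (⋃ i, s i)).toReal|
          ≤ ENNReal.ofReal ((∑ i ∈ Finset.range N,
              |(((κs n) x) (s i)).toReal - ((κ x) (s i)).toReal|)
            + ((((κs n) x) (t N)).toReal + ((κ x) (t N)).toReal)) :=
            ENNReal.ofReal_le_ofReal habs
        _ = (∑ i ∈ Finset.range N,
              ENNReal.ofReal |(((κs n) x) (s i)).toReal - ((κ x) (s i)).toReal|)
            + (((κs n) x) (t N) + (κ x) (t N)) := by
            rw [ENNReal.ofReal_add (by positivity) (by positivity),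
              ENNReal.ofReal_add ENNReal.toReal_nonneg ENNReal.toReal_nonneg,
              ENNReal.ofReal_sum_of_nonneg (fun i _ => abs_nonneg _),
              ENNReal.ofReal_toReal (measure_ne_top _ _),
              ENNReal.ofReal_toReal (measure_ne_top _ _)]
    calc Dset μ κs κ n (⋃ i, s i)
        ≤ ∫⁻ x, ((∑ i ∈ Finset.range N,
              ENNReal.ofReal |(((κs n) x) (s i)).toReal - ((κ x) (s i)).toReal|)
            + (((κs n) x) (t N) + (κ x) (t N))) ∂μ := lintegral_mono hpt
      _ = (∑ i ∈ Finset.range N, Dset μ κs κ n (s i)) + (ν (t N) + ν (t N)) := by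
          rw [lintegral_add_left (by
            exact Finset.measurable_sum _ fun i _ => Dset_meas μ κs κ n (hmeas i))]
          rw [lintegral_add_left ((κs n).measurable_coe (htmeas N))]
          rw [lintegral_finset_sum _ (fun i _ => Dset_meas μ κs κ n (hmeas i))]
          rw [← Measure.bind_apply (htmeas N) (κs n).measurable.aemeasurable, hbs n]
          rw [← Measure.bind_apply (htmeas N) κ.measurable.aemeasurable, hb]
          rfl
  -- tail measure tends to zero
  have htail : Tendsto (fun N => ν (t N)) atTop (𝓝 0) := by
    have hν : ∑' i, ν (s i) ≠ ⊤ := by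
      rw [← measure_iUnion hdisj hmeas]; exact measure_ne_top _ _
    have := ENNReal.tendsto_sum_nat_add (fun i => ν (s i)) hν
    have heq : ∀ N, ν (t N) = ∑' i, ν (s (i + N)) := fun N =>
      measure_iUnion (hdisjN N) (fun i => hmeas _)
    simpa [heq] using this
  -- conclude
  rw [ENNReal.tendsto_atTop_zero]
  intro ε hε
  have hδ : (0 : ℝ≥0∞) < ε / 3 := ENNReal.div_pos hε.ne' (by norm_num)
  obtain ⟨N, hN⟩ := (ENNReal.tendsto_atTop_zero.mp htail) (ε / 3 / 2) (by
    exact ENNReal.div_pos hδ.ne' (by norm_num))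
  have hfin : Tendsto (fun n => ∑ i ∈ Finset.range N, Dset μ κs κ n (s i)) atTop (𝓝 0) := by
    have := tendsto_finset_sum (Finset.range N) (fun i _ => hind i)
    simpa using this
  obtain ⟨M, hM⟩ := (ENNReal.tendsto_atTop_zero.mp hfin) (ε / 3) hδ
  refine ⟨M, fun n hn => ?_⟩
  refine (hbound N n).trans ?_
  have h1 : ν (t N) + ν (t N) ≤ ε / 3 / 2 + ε / 3 / 2 := add_le_add (hN N le_rfl) (hN N le_rfl)
  rw [ENNReal.add_halves] at h1
  calc (∑ i ∈ Finset.range N, Dset μ κs κ n (s i)) + (ν (t N) + ν (t N))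
      ≤ ε / 3 + ε / 3 := add_le_add (hM n hn) h1
    _ ≤ ε / 3 + (ε / 3 + ε / 3) := add_le_add le_rfl (le_add_of_nonneg_left zero_le)
    _ = ε := by
        rw [show (ε / 3 + (ε / 3 + ε / 3)) = 3 * (ε / 3) by ring,
          ENNReal.mul_div_cancel' (by norm_num) (by norm_num)]


/-- distance functional on functions -/
noncomputable def Dl (μ : Measure X) (κs : ℕ → Kernel X Y) (κ : Kernel X Y)
    (n : ℕ) (ψ : Y → ℝ) : ℝ≥0∞ :=
  ∫⁻ x, ENNReal.ofReal |(∫ y, ψ y ∂((κs n) x)) - (∫ y, ψ y ∂(κ x))| ∂μ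

lemma Dl_meas (μ : Measure X) (κs : ℕ → Kernel X Y) (κ : Kernel X Y)
    [∀ n, IsMarkovKernel (κs n)] [IsMarkovKernel κ] (n : ℕ)
    {ψ : Y → ℝ} (hψ : Measurable ψ) :
    Measurable fun x => ENNReal.ofReal |(∫ y, ψ y ∂((κs n) x)) - (∫ y, ψ y ∂(κ x))| :=
  ((meas_int (κs n) hψ).sub (meas_int κ hψ)).abs.ennreal_ofReal

lemma Dl_congr (μ : Measure X) (κs : ℕ → Kernel X Y) (κ : Kernel X Y)
    {ν : Measure Y} (hbs : ∀ n, μ.bind ⇑(κs n) = ν) (hb : μ.bind ⇑κ = ν)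
    {ψ₁ ψ₂ : Y → ℝ} (h₁ : Measurable ψ₁) (h₂ : Measurable ψ₂) (h : ψ₁ =ᵐ[ν] ψ₂) (n : ℕ) :
    Dl μ κs κ n ψ₁ = Dl μ κs κ n ψ₂ := by
  refine lintegral_congr_ae ?_
  filter_upwards [ae_int_congr μ (κs n) (hbs n) h₁ h₂ h, ae_int_congr μ κ hb h₁ h₂ h]
    with x e1 e2
  rw [e1, e2]

set_option synthInstance.maxHeartbeats 1000000 in
theorem general_SOT (μ : Measure X) [IsProbabilityMeasure μ]
    (κs : ℕ → Kernel X Y) (κ : Kernel X Y)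
    [∀ n, IsMarkovKernel (κs n)] [IsMarkovKernel κ]
    (ν : Measure Y) [IsProbabilityMeasure ν]
    (hbs : ∀ n, μ.bind ⇑(κs n) = ν) (hb : μ.bind ⇑κ = ν)
    (hsets : ∀ t, MeasurableSet t → Tendsto (fun n => Dset μ κs κ n t) atTop (𝓝 0))
    {φ : Y → ℝ} (hφm : Measurable φ) (hφi : Integrable φ ν) :
    Tendsto (fun n => ∫ x, |(∫ y, φ y ∂((κs n) x)) - (∫ y, φ y ∂(κ x))| ∂μ)
      atTop (𝓝 0) := by
  set P : (Y → ℝ) → Prop := fun φ₀ => ∀ ψ : Y → ℝ, Measurable ψ → ψ =ᵐ[ν] φ₀ →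
    Tendsto (fun n => Dl μ κs κ n ψ) atTop (𝓝 0) with hP
  have hmain : P φ := by
    refine Integrable.induction (μ := ν) P ?_ ?_ ?_ ?_ hφi
    · -- indicators
      intro c s hs _ ψ hψm hψeq
      have hindm : Measurable (s.indicator fun _ => c) := measurable_const.indicator hs
      have hde : ∀ n, Dl μ κs κ n ψ = Dl μ κs κ n (s.indicator fun _ => c) :=
        Dl_congr μ κs κ hbs hb hψm hindm hψeq
      have hval : ∀ n, Dl μ κs κ n (s.indicator fun _ => c)
          = Dset μ κs κ n s * ENNReal.ofReal |c| := by
        intro n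
        rw [Dl, Dset, ← lintegral_mul_const _ (Dset_meas μ κs κ n hs)]
        refine lintegral_congr fun x => ?_
        rw [integral_indicator_const _ hs, integral_indicator_const _ hs, smul_eq_mul,
          smul_eq_mul, ← sub_mul, abs_mul,
          ENNReal.ofReal_mul (abs_nonneg _)]
        rfl
      have := ENNReal.Tendsto.mul_const (b := ENNReal.ofReal |c|) (hsets s hs) (Or.inr ENNReal.ofReal_ne_top)
      rw [zero_mul] at this
      simpa [hde, hval] using this
    · -- addition
      intro φ₁ φ₂ _ h1i h2i hP1 hP2 ψ hψm hψeq
      set φ₁' := h1i.1.mk φ₁ with hφ₁'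
      set φ₂' := h2i.1.mk φ₂ with hφ₂'
      have hm1 : Measurable φ₁' := h1i.1.stronglyMeasurable_mk.measurable
      have hm2 : Measurable φ₂' := h2i.1.stronglyMeasurable_mk.measurable
      have he1 : φ₁ =ᵐ[ν] φ₁' := h1i.1.ae_eq_mk
      have he2 : φ₂ =ᵐ[ν] φ₂' := h2i.1.ae_eq_mk
      have hi1 : Integrable φ₁' ν := h1i.congr he1
      have hi2 : Integrable φ₂' ν := h2i.congr he2
      have hT1 : Tendsto (fun n => Dl μ κs κ n φ₁') atTop (𝓝 0) := hP1 φ₁' hm1 he1.symm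
      have hT2 : Tendsto (fun n => Dl μ κs κ n φ₂') atTop (𝓝 0) := hP2 φ₂' hm2 he2.symm
      have hde : ∀ n, Dl μ κs κ n ψ = Dl μ κs κ n (fun y => φ₁' y + φ₂' y) := by
        refine Dl_congr μ κs κ hbs hb hψm (hm1.add hm2) (hψeq.trans ?_)
        filter_upwards [he1, he2] with y e1 e2
        simp [Pi.add_apply, e1, e2]
      have hbound : ∀ n, Dl μ κs κ n (fun y => φ₁' y + φ₂' y)
          ≤ Dl μ κs κ n φ₁' + Dl μ κs κ n φ₂' := by
        intro n
        rw [Dl, Dl, Dl, ← lintegral_add_left (Dl_meas μ κs κ n hm1)]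
        refine lintegral_mono_ae ?_
        filter_upwards [ae_integrable μ (κs n) (hbs n) hm1 hi1,
          ae_integrable μ (κs n) (hbs n) hm2 hi2,
          ae_integrable μ κ hb hm1 hi1, ae_integrable μ κ hb hm2 hi2] with x i1 i2 i3 i4
        rw [integral_add i1 i2, integral_add i3 i4]
        rw [show (∫ y, φ₁' y ∂((κs n) x)) + (∫ y, φ₂' y ∂((κs n) x))
            - ((∫ y, φ₁' y ∂(κ x)) + (∫ y, φ₂' y ∂(κ x)))
            = ((∫ y, φ₁' y ∂((κs n) x)) - (∫ y, φ₁' y ∂(κ x)))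
              + ((∫ y, φ₂' y ∂((κs n) x)) - (∫ y, φ₂' y ∂(κ x))) by ring]
        refine (ENNReal.ofReal_le_ofReal (abs_add_le _ _)).trans ?_
        rw [ENNReal.ofReal_add (abs_nonneg _) (abs_nonneg _)]
      have hsum : Tendsto (fun n => Dl μ κs κ n φ₁' + Dl μ κs κ n φ₂') atTop (𝓝 0) := by
        simpa using hT1.add hT2
      have := tendsto_of_tendsto_of_tendsto_of_le_of_le tendsto_const_nhds hsum
        (fun n => zero_le) hbound
      simpa [hde] using this
    · -- closedness in L¹
      refine IsSeqClosed.isClosed ?_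
      intro F G hF hlim
      intro ψ hψm hψeq
      have hψi : Integrable ψ ν := (L1.integrable_coeFn G).congr hψeq.symm
      rw [ENNReal.tendsto_atTop_zero]
      intro ε hε
      have hδ : (0 : ℝ≥0∞) < ε / 3 := ENNReal.div_pos hε.ne' (by norm_num)
      have hdist : Tendsto (fun k => ENNReal.ofReal ‖F k - G‖) atTop (𝓝 0) := by
        have h1 : Tendsto (fun k => ‖F k - G‖) atTop (𝓝 0) := by
          have := tendsto_iff_dist_tendsto_zero.mp hlim
          simpa [dist_eq_norm] using this
        simpa using ENNReal.tendsto_ofReal h1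
      obtain ⟨k₀, hk₀⟩ := (ENNReal.tendsto_atTop_zero.mp hdist) (ε / 3) hδ
      set ψk := (Lp.aestronglyMeasurable (F k₀)).mk (F k₀) with hψk
      have hmk : Measurable ψk := (Lp.aestronglyMeasurable (F k₀)).stronglyMeasurable_mk.measurable
      have hek : ⇑(F k₀) =ᵐ[ν] ψk := (Lp.aestronglyMeasurable (F k₀)).ae_eq_mk
      have hik : Integrable ψk ν := (L1.integrable_coeFn (F k₀)).congr hek
      have hTk : Tendsto (fun n => Dl μ κs κ n ψk) atTop (𝓝 0) := hF k₀ ψk hmk hek.symm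
      obtain ⟨M, hM⟩ := (ENNReal.tendsto_atTop_zero.mp hTk) (ε / 3) hδ
      -- the L¹ distance between ψ and ψk
      have hL : ∫⁻ y, ‖ψ y - ψk y‖₊ ∂ν ≤ ε / 3 := by
        have he : (fun y => ψ y - ψk y) =ᵐ[ν] ⇑(G - F k₀) := by
          filter_upwards [hψeq, hek, Lp.coeFn_sub G (F k₀)] with y e1 e2 e3
          rw [e1, ← e2, e3]; simp
        have : ∫⁻ y, ‖ψ y - ψk y‖₊ ∂ν = eLpNorm (⇑(G - F k₀)) 1 ν := by
          refine (eLpNorm_one_eq_lintegral_enorm (f := fun y => ψ y - ψk y)).symm.trans ?_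
          exact eLpNorm_congr_ae he
        rw [this]
        have h2 : eLpNorm (⇑(G - F k₀)) 1 ν = ENNReal.ofReal ‖G - F k₀‖ := by
          rw [Lp.norm_def, ENNReal.ofReal_toReal (Lp.eLpNorm_ne_top _)]
        rw [h2, show ‖G - F k₀‖ = ‖F k₀ - G‖ from norm_sub_rev _ _]
        exact hk₀ k₀ le_rfl
      refine ⟨M, fun n hn => ?_⟩
      have hm1 : Measurable fun x => ENNReal.ofReal
          |(∫ y, ψ y ∂((κs n) x)) - (∫ y, ψk y ∂((κs n) x))| :=
        ((meas_int (κs n) hψm).sub (meas_int (κs n) hmk)).abs.ennreal_ofReal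
      have hm2 : Measurable fun x => ENNReal.ofReal
          |(∫ y, ψk y ∂((κs n) x)) - (∫ y, ψk y ∂(κ x))| :=
        ((meas_int (κs n) hmk).sub (meas_int κ hmk)).abs.ennreal_ofReal
      have hL' : ∫⁻ y, ‖ψk y - ψ y‖₊ ∂ν ≤ ε / 3 := by
        refine le_trans (le_of_eq (lintegral_congr fun y => ?_)) hL
        rw [show ψk y - ψ y = -(ψ y - ψk y) by ring, nnnorm_neg]
      calc Dl μ κs κ n ψ
          ≤ ∫⁻ x, (ENNReal.ofReal |(∫ y, ψ y ∂((κs n) x)) - (∫ y, ψk y ∂((κs n) x))|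
              + (ENNReal.ofReal |(∫ y, ψk y ∂((κs n) x)) - (∫ y, ψk y ∂(κ x))|
                + ENNReal.ofReal |(∫ y, ψk y ∂(κ x)) - (∫ y, ψ y ∂(κ x))|)) ∂μ := by
            refine lintegral_mono fun x => ?_
            rw [show (∫ y, ψ y ∂((κs n) x)) - (∫ y, ψ y ∂(κ x))
                = ((∫ y, ψ y ∂((κs n) x)) - (∫ y, ψk y ∂((κs n) x)))
                  + (((∫ y, ψk y ∂((κs n) x)) - (∫ y, ψk y ∂(κ x)))
                    + ((∫ y, ψk y ∂(κ x)) - (∫ y, ψ y ∂(κ x)))) by ring]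
            refine le_trans (ENNReal.ofReal_le_ofReal
              ((abs_add_le _ _).trans (add_le_add le_rfl (abs_add_le _ _)))) ?_
            rw [ENNReal.ofReal_add (abs_nonneg _) (by positivity),
              ENNReal.ofReal_add (abs_nonneg _) (abs_nonneg _)]
        _ = (∫⁻ x, ENNReal.ofReal
              |(∫ y, ψ y ∂((κs n) x)) - (∫ y, ψk y ∂((κs n) x))| ∂μ)
            + ((∫⁻ x, ENNReal.ofReal
              |(∫ y, ψk y ∂((κs n) x)) - (∫ y, ψk y ∂(κ x))| ∂μ)
            + (∫⁻ x, ENNReal.ofReal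
              |(∫ y, ψk y ∂(κ x)) - (∫ y, ψ y ∂(κ x))| ∂μ)) := by
            rw [lintegral_add_left hm1, lintegral_add_left hm2]
        _ ≤ ε / 3 + (ε / 3 + ε / 3) := by
            refine add_le_add ((pert μ (κs n) (hbs n) hψm hψi hmk hik).trans hL) ?_
            refine add_le_add (hM n hn) ((pert μ κ hb hmk hik hψm hψi).trans hL')
        _ = ε := by
            rw [show (ε / 3 + (ε / 3 + ε / 3)) = 3 * (ε / 3) by ring,
              ENNReal.mul_div_cancel' (by norm_num) (by norm_num)]
    · -- ae congruence
      intro φ₁ φ₂ heq h1i hP1 ψ hψm hψeq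
      exact hP1 ψ hψm (hψeq.trans heq.symm)
  -- now transfer to the Bochner integral statement
  have hDl : Tendsto (fun n => Dl μ κs κ n φ) atTop (𝓝 0) :=
    hmain φ hφm (Filter.EventuallyEq.refl _ _)
  have heq : ∀ n, ∫ x, |(∫ y, φ y ∂((κs n) x)) - (∫ y, φ y ∂(κ x))| ∂μ
      = (Dl μ κs κ n φ).toReal := by
    intro n
    exact integral_eq_lintegral_of_nonneg_ae (Filter.Eventually.of_forall fun x => abs_nonneg _)
      ((meas_int (κs n) hφm).sub (meas_int κ hφm)).abs.aestronglyMeasurable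
  have := (ENNReal.tendsto_toReal (a := 0) (by simp)).comp hDl
  simp only [ENNReal.toReal_zero] at this
  refine Tendsto.congr (fun n => (heq n).symm) this


lemma isProb_bind (μ : Measure X) [IsProbabilityMeasure μ] (f : X → Measure Y)
    (hf : Measurable f) (hP : ∀ x, IsProbabilityMeasure (f x)) :
    IsProbabilityMeasure (μ.bind f) := by
  constructor
  rw [Measure.bind_apply MeasurableSet.univ hf.aemeasurable]
  have h1 : ∀ x, f x Set.univ = 1 := fun x => by
    haveI := hP x; exact measure_univ
  simp [h1]

variable {X₁ Y₁ X₂ Y₂ : Type*} [MeasurableSpace X₁] [MeasurableSpace Y₁]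
  [MeasurableSpace X₂] [MeasurableSpace Y₂]

lemma bind_prod (μ₁ : Measure X₁) [IsProbabilityMeasure μ₁]
    (μ₂ : Measure X₂) [IsProbabilityMeasure μ₂]
    (κ₁ : Kernel X₁ Y₁) (κ₂ : Kernel X₂ Y₂) [IsMarkovKernel κ₁] [IsMarkovKernel κ₂] :
    (μ₁.prod μ₂).bind ⇑((Kernel.prodMkRight X₂ κ₁) ×ₖ (Kernel.prodMkLeft X₁ κ₂))
      = (μ₁.bind ⇑κ₁).prod (μ₂.bind ⇑κ₂) := by
  haveI := isProb_bind μ₁ ⇑κ₁ κ₁.measurable (fun x => inferInstance)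
  haveI := isProb_bind μ₂ ⇑κ₂ κ₂.measurable (fun x => inferInstance)
  refine (Measure.prod_eq ?_).symm
  intro s t hs ht
  set K := (Kernel.prodMkRight X₂ κ₁) ×ₖ (Kernel.prodMkLeft X₁ κ₂) with hK
  rw [Measure.bind_apply (hs.prod ht) K.measurable.aemeasurable]
  have h1 : ∀ x : X₁ × X₂, K x (s ×ˢ t) = κ₁ x.1 s * κ₂ x.2 t := by
    intro x
    rw [hK, Kernel.prod_apply, Kernel.prodMkRight_apply, Kernel.prodMkLeft_apply,
      Measure.prod_prod]
  simp_rw [h1]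
  rw [lintegral_prod_mul (f := fun x₁ => κ₁ x₁ s) (g := fun x₂ => κ₂ x₂ t)
    (κ₁.measurable_coe hs).aemeasurable (κ₂.measurable_coe ht).aemeasurable,
    Measure.bind_apply hs κ₁.measurable.aemeasurable, Measure.bind_apply ht κ₂.measurable.aemeasurable]

lemma toReal_prob_le_one {Z : Type*} [MeasurableSpace Z] (ρ : Measure Z)
    (hρ : IsProbabilityMeasure ρ) (u : Set Z) : (ρ u).toReal ≤ 1 := by
  have := ENNReal.toReal_mono ENNReal.one_ne_top (prob_le_one (μ := ρ) (s := u))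
  simpa using this

lemma rect_case (μ₁ : Measure X₁) [IsProbabilityMeasure μ₁]
    (μ₂ : Measure X₂) [IsProbabilityMeasure μ₂]
    (κs₁ : ℕ → Kernel X₁ Y₁) (κ₁ : Kernel X₁ Y₁)
    [∀ n, IsMarkovKernel (κs₁ n)] [IsMarkovKernel κ₁]
    (κs₂ : ℕ → Kernel X₂ Y₂) (κ₂ : Kernel X₂ Y₂)
    [∀ n, IsMarkovKernel (κs₂ n)] [IsMarkovKernel κ₂]
    {s : Set Y₁} (hs : MeasurableSet s) {t : Set Y₂} (ht : MeasurableSet t)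
    (hA : Tendsto (fun n => ∫ x₁, |(((κs₁ n) x₁) s).toReal - ((κ₁ x₁) s).toReal| ∂μ₁)
      atTop (𝓝 0))
    (hB : Tendsto (fun n => ∫ x₂, |(((κs₂ n) x₂) t).toReal - ((κ₂ x₂) t).toReal| ∂μ₂)
      atTop (𝓝 0)) :
    Tendsto (fun n => Dset (μ₁.prod μ₂)
      (fun n => (Kernel.prodMkRight X₂ (κs₁ n)) ×ₖ (Kernel.prodMkLeft X₁ (κs₂ n)))
      ((Kernel.prodMkRight X₂ κ₁) ×ₖ (Kernel.prodMkLeft X₁ κ₂)) n (s ×ˢ t))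
      atTop (𝓝 0) := by
  set An := fun n => ∫ x₁, |(((κs₁ n) x₁) s).toReal - ((κ₁ x₁) s).toReal| ∂μ₁ with hAn
  set Bn := fun n => ∫ x₂, |(((κs₂ n) x₂) t).toReal - ((κ₂ x₂) t).toReal| ∂μ₂ with hBn
  have hmA : ∀ n, Measurable fun x₁ => |(((κs₁ n) x₁) s).toReal - ((κ₁ x₁) s).toReal| :=
    fun n => (((κs₁ n).measurable_coe hs).ennreal_toReal.sub
      ((κ₁.measurable_coe hs).ennreal_toReal)).abs
  have hmB : ∀ n, Measurable fun x₂ => |(((κs₂ n) x₂) t).toReal - ((κ₂ x₂) t).toReal| :=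
    fun n => (((κs₂ n).measurable_coe ht).ennreal_toReal.sub
      ((κ₂.measurable_coe ht).ennreal_toReal)).abs
  have hiA : ∀ n, Integrable (fun x₁ => |(((κs₁ n) x₁) s).toReal - ((κ₁ x₁) s).toReal|) μ₁ := by
    intro n
    refine Integrable.mono' (integrable_const 2) (hmA n).aestronglyMeasurable
      (Filter.Eventually.of_forall fun x₁ => ?_)
    rw [Real.norm_eq_abs, abs_abs]
    have h1 := toReal_prob_le_one ((κs₁ n) x₁) inferInstance s
    have h2 := toReal_prob_le_one (κ₁ x₁) inferInstance s
    have h3 : (0:ℝ) ≤ (((κs₁ n) x₁) s).toReal := ENNReal.toReal_nonneg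
    have h4 : (0:ℝ) ≤ ((κ₁ x₁) s).toReal := ENNReal.toReal_nonneg
    rw [abs_le]; constructor <;> linarith
  have hiB : ∀ n, Integrable (fun x₂ => |(((κs₂ n) x₂) t).toReal - ((κ₂ x₂) t).toReal|) μ₂ := by
    intro n
    refine Integrable.mono' (integrable_const 2) (hmB n).aestronglyMeasurable
      (Filter.Eventually.of_forall fun x₂ => ?_)
    rw [Real.norm_eq_abs, abs_abs]
    have h1 := toReal_prob_le_one ((κs₂ n) x₂) inferInstance t
    have h2 := toReal_prob_le_one (κ₂ x₂) inferInstance t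
    have h3 : (0:ℝ) ≤ (((κs₂ n) x₂) t).toReal := ENNReal.toReal_nonneg
    have h4 : (0:ℝ) ≤ ((κ₂ x₂) t).toReal := ENNReal.toReal_nonneg
    rw [abs_le]; constructor <;> linarith
  have hbound : ∀ n, Dset (μ₁.prod μ₂)
      (fun n => (Kernel.prodMkRight X₂ (κs₁ n)) ×ₖ (Kernel.prodMkLeft X₁ (κs₂ n)))
      ((Kernel.prodMkRight X₂ κ₁) ×ₖ (Kernel.prodMkLeft X₁ κ₂)) n (s ×ˢ t)
      ≤ ENNReal.ofReal (An n) + ENNReal.ofReal (Bn n) := by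
    intro n
    set KS : ℕ → Kernel (X₁ × X₂) (Y₁ × Y₂) :=
      fun m => (Kernel.prodMkRight X₂ (κs₁ m)) ×ₖ (Kernel.prodMkLeft X₁ (κs₂ m)) with hKS
    set KK : Kernel (X₁ × X₂) (Y₁ × Y₂) :=
      (Kernel.prodMkRight X₂ κ₁) ×ₖ (Kernel.prodMkLeft X₁ κ₂) with hKK
    have hval : ∀ x : X₁ × X₂,
        ((KS n x) (s ×ˢ t)).toReal
        = (((κs₁ n) x.1) s).toReal * (((κs₂ n) x.2) t).toReal := by
      intro x
      rw [hKS, Kernel.prod_apply, Kernel.prodMkRight_apply, Kernel.prodMkLeft_apply,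
        Measure.prod_prod, ENNReal.toReal_mul]
    have hval' : ∀ x : X₁ × X₂,
        ((KK x) (s ×ˢ t)).toReal
        = ((κ₁ x.1) s).toReal * ((κ₂ x.2) t).toReal := by
      intro x
      rw [hKK, Kernel.prod_apply, Kernel.prodMkRight_apply, Kernel.prodMkLeft_apply,
        Measure.prod_prod, ENNReal.toReal_mul]
    calc Dset (μ₁.prod μ₂) KS KK n (s ×ˢ t)
        ≤ ∫⁻ x, (ENNReal.ofReal |(((κs₁ n) x.1) s).toReal - ((κ₁ x.1) s).toReal|
            + ENNReal.ofReal |(((κs₂ n) x.2) t).toReal - ((κ₂ x.2) t).toReal|)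
            ∂(μ₁.prod μ₂) := by
          rw [Dset]
          refine lintegral_mono fun x => ?_
          rw [hval x, hval' x]
          have ha0 : (0:ℝ) ≤ ((κ₁ x.1) s).toReal := ENNReal.toReal_nonneg
          have hb0 : (0:ℝ) ≤ (((κs₂ n) x.2) t).toReal := ENNReal.toReal_nonneg
          have ha1 : ((κ₁ x.1) s).toReal ≤ 1 := toReal_prob_le_one _ inferInstance _
          have hb1 : (((κs₂ n) x.2) t).toReal ≤ 1 := toReal_prob_le_one _ inferInstance _
          have key : |(((κs₁ n) x.1) s).toReal * (((κs₂ n) x.2) t).toReal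
              - ((κ₁ x.1) s).toReal * ((κ₂ x.2) t).toReal|
              ≤ |(((κs₁ n) x.1) s).toReal - ((κ₁ x.1) s).toReal|
                + |(((κs₂ n) x.2) t).toReal - ((κ₂ x.2) t).toReal| := by
            rw [show (((κs₁ n) x.1) s).toReal * (((κs₂ n) x.2) t).toReal
                - ((κ₁ x.1) s).toReal * ((κ₂ x.2) t).toReal
                = ((((κs₁ n) x.1) s).toReal - ((κ₁ x.1) s).toReal) * (((κs₂ n) x.2) t).toReal
                  + ((κ₁ x.1) s).toReal
                    * ((((κs₂ n) x.2) t).toReal - ((κ₂ x.2) t).toReal) by ring]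
            refine (abs_add_le _ _).trans ?_
            rw [abs_mul, abs_mul, abs_of_nonneg hb0, abs_of_nonneg ha0]
            nlinarith [abs_nonneg ((((κs₁ n) x.1) s).toReal - ((κ₁ x.1) s).toReal),
              abs_nonneg ((((κs₂ n) x.2) t).toReal - ((κ₂ x.2) t).toReal)]
          exact (ENNReal.ofReal_le_ofReal key).trans
            (le_of_eq (ENNReal.ofReal_add (abs_nonneg _) (abs_nonneg _)))
      _ = ENNReal.ofReal (An n) + ENNReal.ofReal (Bn n) := by
          set FA : X₁ → ℝ≥0∞ :=
            fun x₁ => ENNReal.ofReal |(((κs₁ n) x₁) s).toReal - ((κ₁ x₁) s).toReal| with hFA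
          set FB : X₂ → ℝ≥0∞ :=
            fun x₂ => ENNReal.ofReal |(((κs₂ n) x₂) t).toReal - ((κ₂ x₂) t).toReal| with hFB
          have hmFA : Measurable FA := (hmA n).ennreal_ofReal
          have hmFB : Measurable FB := (hmB n).ennreal_ofReal
          have hmfst : Measurable fun x : X₁ × X₂ => FA x.1 := hmFA.comp measurable_fst
          rw [lintegral_add_left hmfst]
          have e1 : ∫⁻ x, FA x.1 ∂(μ₁.prod μ₂) = ∫⁻ x₁, FA x₁ ∂μ₁ := by
            calc ∫⁻ x, FA x.1 ∂(μ₁.prod μ₂)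
                = ∫⁻ x, FA x.1 * (fun (_ : X₂) => (1:ℝ≥0∞)) x.2 ∂(μ₁.prod μ₂) := by simp
              _ = (∫⁻ x₁, FA x₁ ∂μ₁) * (∫⁻ (_x₂ : X₂), (1:ℝ≥0∞) ∂μ₂) :=
                  lintegral_prod_mul hmFA.aemeasurable aemeasurable_const
              _ = ∫⁻ x₁, FA x₁ ∂μ₁ := by simp
          have e2 : ∫⁻ x, FB x.2 ∂(μ₁.prod μ₂) = ∫⁻ x₂, FB x₂ ∂μ₂ := by
            calc ∫⁻ x, FB x.2 ∂(μ₁.prod μ₂)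
                = ∫⁻ x, (fun (_ : X₁) => (1:ℝ≥0∞)) x.1 * FB x.2 ∂(μ₁.prod μ₂) := by simp
              _ = (∫⁻ (_x₁ : X₁), (1:ℝ≥0∞) ∂μ₁) * (∫⁻ x₂, FB x₂ ∂μ₂) :=
                  lintegral_prod_mul aemeasurable_const hmFB.aemeasurable
              _ = ∫⁻ x₂, FB x₂ ∂μ₂ := by simp
          rw [e1, e2, hFA, hFB]
          rw [← ofReal_integral_eq_lintegral_ofReal (hiA n)
            (Filter.Eventually.of_forall fun x₁ => abs_nonneg _),
            ← ofReal_integral_eq_lintegral_ofReal (hiB n)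
            (Filter.Eventually.of_forall fun x₂ => abs_nonneg _)]
  have hlim : Tendsto (fun n => ENNReal.ofReal (An n) + ENNReal.ofReal (Bn n)) atTop (𝓝 0) := by
    have := (ENNReal.tendsto_ofReal hA).add (ENNReal.tendsto_ofReal hB)
    simpa using this
  exact tendsto_of_tendsto_of_tendsto_of_le_of_le tendsto_const_nhds hlim
    (fun n => zero_le) hbound

end ProdSOTAux

open ProdSOTAux

/-- Convergence of a sequence of Markov kernels to a kernel in the strong
operator topology (relative to measures `μ` on the domain and `ν` on the
codomain). -/
def TendstoSOT {X Y : Type*} [MeasurableSpace X] [MeasurableSpace Y]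
    (fs : ℕ → X → Measure Y) (f : X → Measure Y)
    (μ : Measure X) (ν : Measure Y) : Prop :=
  ∀ φ : Y → ℝ, Measurable φ → Integrable φ ν →
    Tendsto (fun n => ∫ x, |(∫ y, φ y ∂(fs n x)) - (∫ y, φ y ∂(f x))| ∂μ)
      atTop (𝓝 0)

/-- The monoidal (product) structure on Markov kernels is continuous for the
strong operator topology. -/
theorem prod_kernel_tendstoSOT
    {X₁ Y₁ X₂ Y₂ : Type*}
    [MeasurableSpace X₁] [StandardBorelSpace X₁] [Nonempty X₁]
    [MeasurableSpace Y₁] [StandardBorelSpace Y₁] [Nonempty Y₁]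
    [MeasurableSpace X₂] [StandardBorelSpace X₂] [Nonempty X₂]
    [MeasurableSpace Y₂] [StandardBorelSpace Y₂] [Nonempty Y₂]
    (μ₁ : Measure X₁) [IsProbabilityMeasure μ₁]
    (μ₂ : Measure X₂) [IsProbabilityMeasure μ₂]
    (fs : ℕ → X₁ → Measure Y₁) (f : X₁ → Measure Y₁)
    (hfs : ∀ n, Measurable (fs n)) (hf : Measurable f)
    (hfsP : ∀ n x, IsProbabilityMeasure (fs n x))
    (hfP : ∀ x, IsProbabilityMeasure (f x))
    (gs : ℕ → X₂ → Measure Y₂) (g : X₂ → Measure Y₂)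
    (hgs : ∀ n, Measurable (gs n)) (hg : Measurable g)
    (hgsP : ∀ n x, IsProbabilityMeasure (gs n x))
    (hgP : ∀ x, IsProbabilityMeasure (g x))
    (hfsbind : ∀ n, μ₁.bind (fs n) = μ₁.bind f)
    (hgsbind : ∀ n, μ₂.bind (gs n) = μ₂.bind g)
    (hfSOT : TendstoSOT fs f μ₁ (μ₁.bind f))
    (hgSOT : TendstoSOT gs g μ₂ (μ₂.bind g)) :
    TendstoSOT
      (fun n (x : X₁ × X₂) => ((fs n x.1).prod (gs n x.2)))
      (fun x : X₁ × X₂ => (f x.1).prod (g x.2))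
      (μ₁.prod μ₂) ((μ₁.bind f).prod (μ₂.bind g)) := by
  intro φ hφm hφi
  haveI h1 : IsProbabilityMeasure (μ₁.bind f) := isProb_bind μ₁ f hf hfP
  haveI h2 : IsProbabilityMeasure (μ₂.bind g) := isProb_bind μ₂ g hg hgP
  set κ₁ : Kernel X₁ Y₁ := ⟨f, hf⟩ with hκ₁
  set κ₂ : Kernel X₂ Y₂ := ⟨g, hg⟩ with hκ₂
  set κs₁ : ℕ → Kernel X₁ Y₁ := fun n => ⟨fs n, hfs n⟩ with hκs₁
  set κs₂ : ℕ → Kernel X₂ Y₂ := fun n => ⟨gs n, hgs n⟩ with hκs₂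
  haveI : IsMarkovKernel κ₁ := ⟨hfP⟩
  haveI : IsMarkovKernel κ₂ := ⟨hgP⟩
  haveI : ∀ n, IsMarkovKernel (κs₁ n) := fun n => ⟨hfsP n⟩
  haveI : ∀ n, IsMarkovKernel (κs₂ n) := fun n => ⟨hgsP n⟩
  set KK : Kernel (X₁ × X₂) (Y₁ × Y₂) :=
    (Kernel.prodMkRight X₂ κ₁) ×ₖ (Kernel.prodMkLeft X₁ κ₂) with hKK
  set KS : ℕ → Kernel (X₁ × X₂) (Y₁ × Y₂) :=
    fun n => (Kernel.prodMkRight X₂ (κs₁ n)) ×ₖ (Kernel.prodMkLeft X₁ (κs₂ n)) with hKS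
  have hb : (μ₁.prod μ₂).bind ⇑KK = (μ₁.bind f).prod (μ₂.bind g) :=
    bind_prod μ₁ μ₂ κ₁ κ₂
  have hbs : ∀ n, (μ₁.prod μ₂).bind ⇑(KS n) = (μ₁.bind f).prod (μ₂.bind g) := by
    intro n
    have h3 := bind_prod μ₁ μ₂ (κs₁ n) (κs₂ n)
    rw [hKS]
    refine h3.trans ?_
    show (μ₁.bind (fs n)).prod (μ₂.bind (gs n)) = _
    rw [hfsbind n, hgsbind n]
  have hA : ∀ s : Set Y₁, MeasurableSet s →
      Tendsto (fun n => ∫ x₁, |(((κs₁ n) x₁) s).toReal - ((κ₁ x₁) s).toReal| ∂μ₁)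
        atTop (𝓝 0) := by
    intro s hs
    have h4 := hfSOT (Set.indicator s fun _ => (1:ℝ)) (measurable_const.indicator hs)
      ((integrable_const (1:ℝ)).indicator hs)
    simp only [integral_indicator_const _ hs, smul_eq_mul, mul_one] at h4
    exact h4
  have hB : ∀ t : Set Y₂, MeasurableSet t →
      Tendsto (fun n => ∫ x₂, |(((κs₂ n) x₂) t).toReal - ((κ₂ x₂) t).toReal| ∂μ₂)
        atTop (𝓝 0) := by
    intro t ht
    have h4 := hgSOT (Set.indicator t fun _ => (1:ℝ)) (measurable_const.indicator ht)
      ((integrable_const (1:ℝ)).indicator ht)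
    simp only [integral_indicator_const _ ht, smul_eq_mul, mul_one] at h4
    exact h4
  have hsets : ∀ t : Set (Y₁ × Y₂), MeasurableSet t →
      Tendsto (fun n => Dset (μ₁.prod μ₂) KS KK n t) atTop (𝓝 0) := by
    intro t ht
    refine MeasurableSpace.induction_on_inter
      (C := fun u _ => Tendsto (fun n => Dset (μ₁.prod μ₂) KS KK n u) atTop (𝓝 0))
      generateFrom_prod.symm isPiSystem_prod ?_ ?_ ?_ ?_ t ht
    · simp only [Dset, measure_empty]; simpa using (tendsto_const_nhds :
        Tendsto (fun _ : ℕ => (0:ℝ≥0∞)) atTop (𝓝 0))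
    · rintro u ⟨s, hs, t', ht', rfl⟩
      exact rect_case μ₁ μ₂ κs₁ κ₁ κs₂ κ₂ hs ht' (hA s hs) (hB t' ht')
    · intro u hu hind
      exact tendsto_Dset_compl (μ₁.prod μ₂) KS KK hu hind
    · intro si hd hm hind
      exact tendsto_Dset_iUnion (μ₁.prod μ₂) KS KK hbs hb si hd hm hind
  have hmain := general_SOT (μ₁.prod μ₂) KS KK ((μ₁.bind f).prod (μ₂.bind g))
    hbs hb hsets hφm hφi
  have happ : ∀ n (x : X₁ × X₂), (KS n) x = (fs n x.1).prod (gs n x.2) := by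
    intro n x
    rw [hKS]
    rw [Kernel.prod_apply, Kernel.prodMkRight_apply, Kernel.prodMkLeft_apply]
    rfl
  have happ' : ∀ x : X₁ × X₂, KK x = (f x.1).prod (g x.2) := by
    intro x
    rw [hKK]
    rw [Kernel.prod_apply, Kernel.prodMkRight_apply, Kernel.prodMkLeft_apply]
    rfl
  simp only [happ, happ'] at hmain
  exact hmain
end

section
/- (Composition of Markov kernels is jointly SOT-continuous) Let X, Y, Z be nonempty standard Borel spaces, μ a probability measure on X, and let gⁿ, g : X ⇸ Y and hⁿ, h : Y ⇸ Z be Markov kernels with μ.bind gⁿ = μ.bind g = ν and ν.bind hⁿ = ν.bind h = ρ for all n. If gⁿ converges to g in the strong operator topology (relative to μ, ν) and hⁿ converges to h in the strong operator topology (relative to ν, ρ), then the composites hⁿ ∘ gⁿ : X ⇸ Z converge to h ∘ g in the strong operator topology relative to μ and ρ, i.e. for every ρ-integrable measurable φ : Z → ℝ, ∫_X |∫_Z φ d((hⁿ ∘ gⁿ) x) − ∫_Z φ d((h ∘ g) x)| dμ(x) → 0 as n → ∞. -/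
open MeasureTheory Filter Topology

section AuxKernel
open ProbabilityTheory

lemma measurable_integral_bind_aux {Y Z : Type*} [MeasurableSpace Y] [MeasurableSpace Z]
    (h : Y → Measure Z) (hh : Measurable h) (hhP : ∀ y, IsProbabilityMeasure (h y))
    {φ : Z → ℝ} (hφ : Measurable φ) :
    Measurable fun y => ∫ z, φ z ∂(h y) := by
  letI K : Kernel Y Z := ⟨h, hh⟩
  haveI : IsMarkovKernel K := ⟨hhP⟩
  exact (MeasureTheory.StronglyMeasurable.integral_kernel_prod_right (κ := K)
    (f := fun _ z => φ z) ((hφ.comp measurable_snd).stronglyMeasurable)).measurable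

lemma bind_integral_facts {X Y : Type*} [MeasurableSpace X] [MeasurableSpace Y]
    (μ : Measure X) [SFinite μ] (κ : X → Measure Y) (hκ : Measurable κ)
    (hκP : ∀ x, IsProbabilityMeasure (κ x))
    {φ : Y → ℝ} (hφ : Measurable φ) (hint : Integrable φ (μ.bind κ)) :
    (∀ᵐ x ∂μ, Integrable φ (κ x)) ∧
      Integrable (fun x => ∫ y, φ y ∂(κ x)) μ ∧
      ∫ y, φ y ∂(μ.bind κ) = ∫ x, ∫ y, φ y ∂(κ x) ∂μ := by
  letI K : Kernel X Y := ⟨κ, hκ⟩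
  haveI : IsMarkovKernel K := ⟨hκP⟩
  have hmap : (μ ⊗ₘ K).map Prod.snd = μ.bind κ := by
    ext s hs
    rw [Measure.map_apply measurable_snd hs,
        Measure.compProd_apply (measurable_snd hs),
        Measure.bind_apply hs hκ.aemeasurable]
    rfl
  have hint' : Integrable (fun p : X × Y => φ p.2) (μ ⊗ₘ K) := by
    rw [← hmap] at hint
    exact (integrable_map_measure hφ.aestronglyMeasurable
      measurable_snd.aemeasurable).mp hint
  obtain ⟨h1, h2⟩ := (Measure.integrable_compProd_iff hint'.aestronglyMeasurable).mp hint'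
  have hsm : StronglyMeasurable fun x => ∫ y, φ y ∂(κ x) :=
    MeasureTheory.StronglyMeasurable.integral_kernel_prod_right (κ := K)
      (f := fun _ y => φ y) ((hφ.comp measurable_snd).stronglyMeasurable)
  refine ⟨h1, ?_, ?_⟩
  · refine h2.mono' hsm.aestronglyMeasurable ?_
    filter_upwards with x
    exact (norm_integral_le_integral_norm _)
  · rw [← hmap, integral_map measurable_snd.aemeasurable hφ.aestronglyMeasurable,
      Measure.integral_compProd hint']
    rfl

lemma isProbabilityMeasure_bind_aux {X Y : Type*} [MeasurableSpace X] [MeasurableSpace Y]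
    (μ : Measure X) [IsProbabilityMeasure μ] (κ : X → Measure Y) (hκ : Measurable κ)
    (hκP : ∀ x, IsProbabilityMeasure (κ x)) : IsProbabilityMeasure (μ.bind κ) := by
  constructor
  rw [Measure.bind_apply MeasurableSet.univ hκ.aemeasurable]
  simp only [fun x => (hκP x).measure_univ]
  simp

end AuxKernel

/-- Composition of Markov kernels is jointly continuous for the strong
operator topology. -/
theorem comp_kernel_tendstoSOT
    {X Y Z : Type*}
    [MeasurableSpace X] [StandardBorelSpace X] [Nonempty X]
    [MeasurableSpace Y] [StandardBorelSpace Y] [Nonempty Y]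
    [MeasurableSpace Z] [StandardBorelSpace Z] [Nonempty Z]
    (μ : Measure X) [IsProbabilityMeasure μ]
    (gs : ℕ → X → Measure Y) (g : X → Measure Y)
    (hgs : ∀ n, Measurable (gs n)) (hg : Measurable g)
    (hgsP : ∀ n x, IsProbabilityMeasure (gs n x))
    (hgP : ∀ x, IsProbabilityMeasure (g x))
    (hs : ℕ → Y → Measure Z) (h : Y → Measure Z)
    (hhs : ∀ n, Measurable (hs n)) (hh : Measurable h)
    (hhsP : ∀ n y, IsProbabilityMeasure (hs n y))
    (hhP : ∀ y, IsProbabilityMeasure (h y))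
    (hgsbind : ∀ n, μ.bind (gs n) = μ.bind g)
    (hhsbind : ∀ n, (μ.bind g).bind (hs n) = (μ.bind g).bind h)
    (hgSOT : TendstoSOT gs g μ (μ.bind g))
    (hhSOT : TendstoSOT hs h (μ.bind g) ((μ.bind g).bind h)) :
    TendstoSOT
      (fun n x => (gs n x).bind (hs n))
      (fun x => (g x).bind h)
      μ ((μ.bind g).bind h) := by
  intro φ hφ hφint
  set ν := μ.bind g with hν
  set ρ := ν.bind h with hρ
  -- ψ and ψn
  set ψ : Y → ℝ := fun y => ∫ z, φ z ∂(h y) with hψdef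
  set ψs : ℕ → Y → ℝ := fun n y => ∫ z, φ z ∂(hs n y) with hψsdef
  haveI : IsProbabilityMeasure ν := isProbabilityMeasure_bind_aux μ g hg hgP
  have hψm : Measurable ψ := measurable_integral_bind_aux h hh hhP hφ
  have hψsm : ∀ n, Measurable (ψs n) := fun n =>
    measurable_integral_bind_aux (hs n) (hhs n) (hhsP n) hφ
  -- facts for h over ν
  obtain ⟨-, hψint, -⟩ := bind_integral_facts ν h hh hhP hφ hφint
  have hψsint : ∀ n, Integrable (ψs n) ν := fun n => by
    have := (bind_integral_facts ν (hs n) (hhs n) (hhsP n) hφ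
      (by rw [hhsbind n]; exact hφint)).2.1
    exact this
  -- composite kernels
  have hcompm : ∀ n, Measurable fun x => (gs n x).bind (hs n) := fun n =>
    (Measure.measurable_bind' (hhs n)).comp (hgs n)
  have hcompm' : Measurable fun x => (g x).bind h :=
    (Measure.measurable_bind' hh).comp hg
  have hcompP : ∀ n x, IsProbabilityMeasure ((gs n x).bind (hs n)) := fun n x => by
    haveI := hgsP n x
    exact isProbabilityMeasure_bind_aux (gs n x) (hs n) (hhs n) (hhsP n)
  have hcompP' : ∀ x, IsProbabilityMeasure ((g x).bind h) := fun x => by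
    haveI := hgP x
    exact isProbabilityMeasure_bind_aux (g x) h hh hhP
  have hbindcomp : ∀ n, μ.bind (fun x => (gs n x).bind (hs n)) = ρ := fun n => by
    rw [← Measure.bind_bind (hgs n).aemeasurable (hhs n).aemeasurable, hgsbind n, hhsbind n]
  have hbindcomp' : μ.bind (fun x => (g x).bind h) = ρ := by
    rw [← Measure.bind_bind hg.aemeasurable hh.aemeasurable]
  -- integrability/integral facts for composite kernels over μ
  have hρint : Integrable φ ρ := hφint
  -- main estimate
  have key : ∀ n,
      (∫ x, |(∫ z, φ z ∂((gs n x).bind (hs n))) - (∫ z, φ z ∂((g x).bind h))| ∂μ)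
        ≤ (∫ y, |ψs n y - ψ y| ∂ν)
          + ∫ x, |(∫ y, ψ y ∂(gs n x)) - (∫ y, ψ y ∂(g x))| ∂μ := by
    intro n
    -- pointwise a.e. facts
    obtain ⟨hae1, hint1, -⟩ := bind_integral_facts μ _ (hcompm n) (hcompP n) hφ
      (by rw [hbindcomp n]; exact hρint)
    obtain ⟨hae2, hint2, -⟩ := bind_integral_facts μ _ hcompm' hcompP' hφ
      (by rw [hbindcomp']; exact hρint)
    have hsub : Integrable (fun y => |ψs n y - ψ y|) ν := ((hψsint n).sub hψint).abs
    obtain ⟨hae3, hint3, heq3⟩ := bind_integral_facts μ (gs n) (hgs n) (hgsP n)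
      ((hψsm n).sub hψm).abs (by rw [hgsbind n]; exact hsub)
    obtain ⟨hae4, hint4, -⟩ := bind_integral_facts μ (gs n) (hgs n) (hgsP n) hψm
      (by rw [hgsbind n]; exact hψint)
    obtain ⟨hae4', hint4', -⟩ := bind_integral_facts μ (gs n) (hgs n) (hgsP n) (hψsm n)
      (by rw [hgsbind n]; exact hψsint n)
    obtain ⟨hae5, hint5, -⟩ := bind_integral_facts μ g hg hgP hψm hψint
    -- a.e. evaluation of composite integrals
    have haeA : ∀ᵐ x ∂μ, (∫ z, φ z ∂((gs n x).bind (hs n))) = ∫ y, ψs n y ∂(gs n x) := by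
      -- Integrable φ ((gs n x).bind (hs n)) a.e.
      have : ∀ᵐ x ∂μ, Integrable φ ((gs n x).bind (hs n)) := by
        have := (bind_integral_facts μ _ (hcompm n) (hcompP n) hφ
          (by rw [hbindcomp n]; exact hρint)).1
        exact this
      filter_upwards [this] with x hx
      haveI := hgsP n x
      exact (bind_integral_facts (gs n x) (hs n) (hhs n) (hhsP n) hφ hx).2.2
    have haeB : ∀ᵐ x ∂μ, (∫ z, φ z ∂((g x).bind h)) = ∫ y, ψ y ∂(g x) := by
      have : ∀ᵐ x ∂μ, Integrable φ ((g x).bind h) := by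
        have := (bind_integral_facts μ _ hcompm' hcompP' hφ
          (by rw [hbindcomp']; exact hρint)).1
        exact this
      filter_upwards [this] with x hx
      haveI := hgP x
      exact (bind_integral_facts (g x) h hh hhP hφ hx).2.2
    calc (∫ x, |(∫ z, φ z ∂((gs n x).bind (hs n))) - (∫ z, φ z ∂((g x).bind h))| ∂μ)
        ≤ ∫ x, ((∫ y, |ψs n y - ψ y| ∂(gs n x))
            + |(∫ y, ψ y ∂(gs n x)) - (∫ y, ψ y ∂(g x))|) ∂μ := by
          refine integral_mono_ae (hint1.sub hint2).abs
            (hint3.add ((hint4.sub hint5).abs)) ?_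
          filter_upwards [haeA, haeB, hae3, hae4, hae4'] with x hA hB h3 h4 h4'
          rw [hA, hB]
          calc |(∫ y, ψs n y ∂(gs n x)) - (∫ y, ψ y ∂(g x))|
              ≤ |(∫ y, ψs n y ∂(gs n x)) - (∫ y, ψ y ∂(gs n x))|
                + |(∫ y, ψ y ∂(gs n x)) - (∫ y, ψ y ∂(g x))| := abs_sub_le _ _ _
            _ ≤ (∫ y, |ψs n y - ψ y| ∂(gs n x))
                + |(∫ y, ψ y ∂(gs n x)) - (∫ y, ψ y ∂(g x))| := by
                gcongr
                rw [← integral_sub h4' h4]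
                simpa [Real.norm_eq_abs] using
                  norm_integral_le_integral_norm (μ := gs n x) (fun y => ψs n y - ψ y)
      _ = (∫ x, (∫ y, |ψs n y - ψ y| ∂(gs n x)) ∂μ)
            + ∫ x, |(∫ y, ψ y ∂(gs n x)) - (∫ y, ψ y ∂(g x))| ∂μ :=
          integral_add hint3 ((hint4.sub hint5).abs)
      _ = (∫ y, |ψs n y - ψ y| ∂ν)
            + ∫ x, |(∫ y, ψ y ∂(gs n x)) - (∫ y, ψ y ∂(g x))| ∂μ := by
          simp only [Pi.sub_apply] at heq3
          rw [← heq3, hgsbind n]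
  -- limits
  have lim1 : Tendsto (fun n => ∫ y, |ψs n y - ψ y| ∂ν) atTop (𝓝 0) := hhSOT φ hφ hφint
  have lim2 : Tendsto (fun n => ∫ x, |(∫ y, ψ y ∂(gs n x)) - (∫ y, ψ y ∂(g x))| ∂μ)
      atTop (𝓝 0) := hgSOT ψ hψm hψint
  have limsum := lim1.add lim2
  rw [add_zero] at limsum
  refine squeeze_zero (fun n => integral_nonneg fun x => abs_nonneg _) key limsum
end
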